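/- arXiv:1301.4168 — 2 statements merged into one kernel-verified Lean document; each statement's English description precedes it below -/
import Mathlib

section
/- (Main theorem: O(1/T) convergence of herded Gibbs on complete graphs) For a fully connected graph, with herded Gibbs using a fixed scanning order and the corresponding Gibbs sweep kernel having Dobrushin coefficient η < 1, there exist constants l > 0 and B > 0 such that d_v(P_T^{(τ)} − π) ≤ λ/T for all T ≥ T* and τ > τ*(T), where λ = 2N(1+η)/(l(1−η)), T* = 2B/l, and τ*(T) = log_{2/(1+η)}((1−η)lT/(4N)). -/
open Finset

/-- Joint states of `N` binary variables. -/
abbrev GState (N : ℕ) := Fin N → Bool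

/-- Full conditional probability π(Xᵢ = b | x₋ᵢ) for a target distribution π. -/
noncomputable def condProb {N : ℕ} (π : GState N → ℝ) (i : Fin N) (x : GState N)
    (b : Bool) : ℝ :=
  π (Function.update x i b) / (π (Function.update x i true) + π (Function.update x i false))

/-- Variable updated at step `t ≥ 1` of a fixed systematic scan (step kN + i with
1 ≤ i ≤ N updates the i-th variable, i.e. index i − 1). -/
def scanVar (N : ℕ) (hN : 0 < N) (t : ℕ) : Fin N := ⟨(t - 1) % N, Nat.mod_lt _ hN⟩

/-- A herded Gibbs trajectory on a fully connected graph of `N` binary variables with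
target `π`: one weight per variable `i` and per assignment of all the other variables
(weights are indexed by full states but only the off-`i` coordinates matter); at step
`t+1` the scanned variable emits 𝟙[w > 0] and only its active weight is updated. -/
structure HerdedGibbs (N : ℕ) (hN : 0 < N) (π : GState N → ℝ) where
  X : ℕ → GState N
  W : ℕ → Fin N → GState N → ℝ
  init_support : 0 < π (X 0)
  init_w : ∀ i x, condProb π i x true - 1 < W 0 i x ∧ W 0 i x ≤ condProb π i x true
  step_other : ∀ t j, j ≠ scanVar N hN (t + 1) → X (t + 1) j = X t j
  step_cur : ∀ t, X (t + 1) (scanVar N hN (t + 1))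
      = decide (0 < W t (scanVar N hN (t + 1)) (X t))
  w_active : ∀ t x, (∀ j, j ≠ scanVar N hN (t + 1) → x j = X t j) →
      W (t + 1) (scanVar N hN (t + 1)) x
        = W t (scanVar N hN (t + 1)) x + condProb π (scanVar N hN (t + 1)) x true
          - (if X (t + 1) (scanVar N hN (t + 1)) = true then 1 else 0)
  w_frozen : ∀ t i x, ¬(i = scanVar N hN (t + 1) ∧ ∀ j, j ≠ i → x j = X t j) →
      W (t + 1) i x = W t i x

/-- Transition matrix 𝒯ᵢ of regular Gibbs updating variable `i`. -/
noncomputable def stepKernel {N : ℕ} (π : GState N → ℝ) (i : Fin N) :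
    Matrix (GState N) (GState N) ℝ :=
  fun x y => if ∀ j, j ≠ i → x j = y j then condProb π i x (y i) else 0

/-- Full-sweep Gibbs transition kernel 𝒯 = 𝒯₁𝒯₂⋯𝒯_N. -/
noncomputable def sweepKernel {N : ℕ} (π : GState N → ℝ) :
    Matrix (GState N) (GState N) ℝ :=
  (List.ofFn fun i : Fin N => stepKernel π i).prod

/-- Total variation distance d_v(μ − ν) = ‖μ − ν‖₁ / 2 on a finite state space. -/
noncomputable def tvDist {α : Type*} [Fintype α] (μ ν : α → ℝ) : ℝ :=
  (∑ x, |μ x - ν x|) / 2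

/-- Dobrushin ergodic coefficient of a transition matrix. -/
noncomputable def dobrushin {α : Type*} [Fintype α] (K : Matrix α α ℝ) : ℝ :=
  ⨆ x, ⨆ x', tvDist (K x) (K x')

/-- Empirical distribution of `T` end-of-sweep samples starting at sweep `τ`. -/
noncomputable def empDist {N : ℕ} (X : ℕ → GState N) (τ T : ℕ) : GState N → ℝ :=
  fun x => (((Finset.Ico τ (τ + T)).filter fun k => X (k * N) = x).card : ℝ) / T

/-- N_num: number of occurrences of the joint state (x₋ᵢ, b) at substep `i` of sweeps
τ, …, τ+T−1. -/
def empNum {N : ℕ} (hN : 0 < N) (X : ℕ → GState N) (τ T i : ℕ) (x : GState N)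
    (b : Bool) : ℕ :=
  ((Finset.Ico τ (τ + T)).filter fun k =>
    (∀ j, j ≠ scanVar N hN i → X (k * N + i) j = x j)
      ∧ X (k * N + i) (scanVar N hN i) = b).card

/-- N_den: number of occurrences of the conditioning state x₋ᵢ at substep `i − 1`. -/
def empDen {N : ℕ} (hN : 0 < N) (X : ℕ → GState N) (τ T i : ℕ) (x : GState N) : ℕ :=
  ((Finset.Ico τ (τ + T)).filter fun k =>
    ∀ j, j ≠ scanVar N hN i → X (k * N + i - 1) j = x j).card

/-- Empirical herded Gibbs single-step transition kernel T̃⁽ᵗ⁾_{T,i}; entries with an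
unvisited conditioning state are set to the regular Gibbs kernel. -/
noncomputable def empStepKernel {N : ℕ} (hN : 0 < N) (π : GState N → ℝ)
    (X : ℕ → GState N) (τ T i : ℕ) : Matrix (GState N) (GState N) ℝ :=
  fun x y => if ∀ j, j ≠ scanVar N hN i → x j = y j then
      (if empDen hN X τ T i x = 0 then condProb π (scanVar N hN i) x (y (scanVar N hN i))
       else (empNum hN X τ T i x (y (scanVar N hN i)) : ℝ) / (empDen hN X τ T i x : ℝ))
    else 0

/-- Empirical full-sweep herded Gibbs kernel T̃⁽ᵗ⁾_T = T̃⁽ᵗ⁾_{T,1}⋯T̃⁽ᵗ⁾_{T,N}. -/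
noncomputable def empSweepKernel {N : ℕ} (hN : 0 < N) (π : GState N → ℝ)
    (X : ℕ → GState N) (τ T : ℕ) : Matrix (GState N) (GState N) ℝ :=
  (List.ofFn fun i : Fin N => empStepKernel hN π X τ T (i + 1)).prod

section Aux

lemma condProb_nonneg {N : ℕ} (π : GState N → ℝ) (hπ0 : ∀ x, 0 ≤ π x)
    (i : Fin N) (x : GState N) (b : Bool) : 0 ≤ condProb π i x b :=
  div_nonneg (hπ0 _) (add_nonneg (hπ0 _) (hπ0 _))

lemma condProb_le_one {N : ℕ} (π : GState N → ℝ) (hπ0 : ∀ x, 0 ≤ π x)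
    (i : Fin N) (x : GState N) (b : Bool) : condProb π i x b ≤ 1 := by
  unfold condProb
  apply div_le_one_of_le₀
  · cases b
    · nlinarith [hπ0 (Function.update x i true)]
    · nlinarith [hπ0 (Function.update x i false)]
  · exact add_nonneg (hπ0 _) (hπ0 _)

lemma update_eq_of_offAgree {N : ℕ} {i : Fin N} {x y : GState N}
    (h : ∀ j, j ≠ i → x j = y j) (b : Bool) :
    Function.update x i b = Function.update y i b := by
  funext j
  by_cases hj : j = i
  · subst hj; simp
  · simp [Function.update_of_ne hj, h j hj]

lemma condProb_congr {N : ℕ} (π : GState N → ℝ) {i : Fin N} {x y : GState N}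
    (h : ∀ j, j ≠ i → x j = y j) (b : Bool) :
    condProb π i x b = condProb π i y b := by
  unfold condProb
  rw [update_eq_of_offAgree h, update_eq_of_offAgree h, update_eq_of_offAgree h]

lemma condProb_add {N : ℕ} (π : GState N → ℝ) {i : Fin N} {x : GState N}
    (hs : π (Function.update x i true) + π (Function.update x i false) ≠ 0) :
    condProb π i x true + condProb π i x false = 1 := by
  unfold condProb
  field_simp

lemma scanVar_eq {N : ℕ} (hN : 0 < N) (k j : ℕ) (hj : j < N) :
    scanVar N hN (k * N + j + 1) = ⟨j, hj⟩ := by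
  unfold scanVar
  apply Fin.ext
  show (k * N + j + 1 - 1) % N = j
  have h1 : k * N + j + 1 - 1 = k * N + j := by omega
  rw [h1, Nat.add_comm (k * N) j, Nat.add_mul_mod_self_right, Nat.mod_eq_of_lt hj]

end Aux
section Weights

variable {N : ℕ} {hN : 0 < N} {π : GState N → ℝ}

lemma w_diff_const (hg : HerdedGibbs N hN π) :
    ∀ (t : ℕ) (i : Fin N) (x y : GState N), (∀ j, j ≠ i → x j = y j) →
      hg.W t i x - hg.W t i y = hg.W 0 i x - hg.W 0 i y := by
  intro t
  induction t with
  | zero => intro i x y _; rfl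
  | succ t ih =>
    intro i x y h
    by_cases hiv : i = scanVar N hN (t + 1)
    · by_cases hx : ∀ j, j ≠ i → x j = hg.X t j
      · have hy : ∀ j, j ≠ i → y j = hg.X t j := fun j hj => (h j hj).symm.trans (hx j hj)
        have hax := hg.w_active t x (by rw [← hiv]; exact hx)
        have hay := hg.w_active t y (by rw [← hiv]; exact hy)
        rw [← hiv] at hax hay
        have hp : condProb π i x true = condProb π i y true := condProb_congr π h true
        rw [hax, hay, hp]
        have hih := ih i x y h
        ring_nf
        ring_nf at hih
        linarith
      · have hfx := hg.w_frozen t i x (by tauto)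
        have hfy := hg.w_frozen t i y (by
          rintro ⟨_, hy⟩
          exact hx fun j hj => (h j hj).trans (hy j hj))
        rw [hfx, hfy]; exact ih i x y h
    · have hfx := hg.w_frozen t i x (fun hc => hiv hc.1)
      have hfy := hg.w_frozen t i y (fun hc => hiv hc.1)
      rw [hfx, hfy]; exact ih i x y h

lemma w_bounds (hg : HerdedGibbs N hN π) (hπ0 : ∀ x, 0 ≤ π x) :
    ∀ (t : ℕ) (i : Fin N) (x : GState N),
      condProb π i x true - 2 < hg.W t i x ∧ hg.W t i x ≤ condProb π i x true + 1 := by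
  intro t
  induction t with
  | zero =>
    intro i x
    have h := hg.init_w i x
    exact ⟨by linarith [h.1], by linarith [h.2]⟩
  | succ t ih =>
    intro i x
    by_cases hiv : i = scanVar N hN (t + 1)
    · by_cases hx : ∀ j, j ≠ i → x j = hg.X t j
      · have hagree : ∀ j, j ≠ i → hg.X t j = x j := fun j hj => (hx j hj).symm
        have hax := hg.w_active t x (by rw [← hiv]; exact hx)
        rw [← hiv] at hax
        have hd := w_diff_const hg t i (hg.X t) x hagree
        have h0X := hg.init_w i (hg.X t)
        have h0x := hg.init_w i x
        have hpX : condProb π i (hg.X t) true = condProb π i x true :=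
          condProb_congr π hagree true
        rw [hpX] at h0X
        have hsc := hg.step_cur t
        rw [← hiv] at hsc
        have hp0 := condProb_nonneg π hπ0 i x true
        have hp1 := condProb_le_one π hπ0 i x true
        have hIH := ih i x
        by_cases h01 : 0 < hg.W t i (hg.X t)
        · have he : hg.X (t + 1) i = true := by rw [hsc]; simpa using h01
          rw [hax, he]
          norm_num
          constructor <;> linarith
        · have he : hg.X (t + 1) i = false := by rw [hsc]; simpa using h01
          rw [hax, he]
          norm_num
          constructor <;> linarith
      · have hfx := hg.w_frozen t i x (by tauto)
        rw [hfx]; exact ih i x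
    · have hfx := hg.w_frozen t i x (fun hc => hiv hc.1)
      rw [hfx]; exact ih i x

lemma w_nonpos (hg : HerdedGibbs N hN π) {i : Fin N} {x : GState N}
    (hp : condProb π i x true = 0) : ∀ t, hg.W t i x ≤ 0 := by
  intro t
  induction t with
  | zero => have h := hg.init_w i x; linarith [h.2, hp]
  | succ t ih =>
    by_cases hiv : i = scanVar N hN (t + 1)
    · by_cases hx : ∀ j, j ≠ i → x j = hg.X t j
      · have hax := hg.w_active t x (by rw [← hiv]; exact hx)
        rw [← hiv] at hax
        rw [hax, hp]
        have : (0:ℝ) ≤ (if hg.X (t + 1) i = true then (1:ℝ) else 0) := by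
          split <;> norm_num
        linarith
      · rw [hg.w_frozen t i x (by tauto)]; exact ih
    · rw [hg.w_frozen t i x (fun hc => hiv hc.1)]; exact ih

lemma w_pos (hg : HerdedGibbs N hN π) {i : Fin N} {x : GState N}
    (hp : condProb π i x true = 1) : ∀ t, 0 < hg.W t i x := by
  intro t
  induction t with
  | zero => have h := hg.init_w i x; linarith [h.1, hp]
  | succ t ih =>
    by_cases hiv : i = scanVar N hN (t + 1)
    · by_cases hx : ∀ j, j ≠ i → x j = hg.X t j
      · have hax := hg.w_active t x (by rw [← hiv]; exact hx)
        rw [← hiv] at hax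
        rw [hax, hp]
        have : (if hg.X (t + 1) i = true then (1:ℝ) else 0) ≤ 1 := by
          split <;> norm_num
        linarith
      · rw [hg.w_frozen t i x (by tauto)]; exact ih
    · rw [hg.w_frozen t i x (fun hc => hiv hc.1)]; exact ih

lemma X_succ_eq (hg : HerdedGibbs N hN π) (t : ℕ) :
    hg.X (t + 1) = Function.update (hg.X t) (scanVar N hN (t + 1))
      (decide (0 < hg.W t (scanVar N hN (t + 1)) (hg.X t))) := by
  funext j
  by_cases hj : j = scanVar N hN (t + 1)
  · subst hj; rw [Function.update_self]; exact hg.step_cur t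
  · rw [Function.update_of_ne hj]; exact hg.step_other t j hj

lemma support_pos (hg : HerdedGibbs N hN π) (hπ0 : ∀ x, 0 ≤ π x) :
    ∀ t, 0 < π (hg.X t) := by
  intro t
  induction t with
  | zero => exact hg.init_support
  | succ t ih =>
    set v := scanVar N hN (t + 1) with hv
    have hXt1 := X_succ_eq hg t
    rw [← hv] at hXt1
    have hself : Function.update (hg.X t) v (hg.X t v) = hg.X t :=
      Function.update_eq_self v (hg.X t)
    have hXsum : π (hg.X t) ≤ π (Function.update (hg.X t) v true)
        + π (Function.update (hg.X t) v false) := by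
      cases hb : hg.X t v
      · rw [hb] at hself; rw [hself]; linarith [hπ0 (Function.update (hg.X t) v true)]
      · rw [hb] at hself; rw [hself]; linarith [hπ0 (Function.update (hg.X t) v false)]
    by_cases hT0 : π (Function.update (hg.X t) v true) = 0
    · have hp0 : condProb π v (hg.X t) true = 0 := by
        unfold condProb; rw [hT0]; simp
      have hW := w_nonpos hg hp0 t
      have hdec : decide (0 < hg.W t v (hg.X t)) = false := by
        simp only [decide_eq_false_iff_not]; linarith
      rw [hXt1, hdec]
      have : π (Function.update (hg.X t) v false) > 0 := by
        rcases lt_or_eq_of_le (hπ0 (Function.update (hg.X t) v false)) with h | h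
        · exact h
        · exfalso; rw [hT0, ← h] at hXsum; linarith
      exact this
    · have hT : 0 < π (Function.update (hg.X t) v true) :=
        lt_of_le_of_ne (hπ0 _) (Ne.symm hT0)
      by_cases hb : decide (0 < hg.W t v (hg.X t)) = true
      · rw [hXt1, hb]; exact hT
      · have hbf : decide (0 < hg.W t v (hg.X t)) = false := by
          cases h : decide (0 < hg.W t v (hg.X t))
          · rfl
          · exact absurd h hb
        have hW : ¬ (0 < hg.W t v (hg.X t)) := of_decide_eq_false hbf
        by_cases hF0 : π (Function.update (hg.X t) v false) = 0
        · have hp1 : condProb π v (hg.X t) true = 1 := by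
            unfold condProb; rw [hF0, add_zero, div_self hT0]
          exact absurd (w_pos hg hp1 t) hW
        · rw [hXt1, hbf]
          exact lt_of_le_of_ne (hπ0 _) (Ne.symm hF0)

end Weights
section Telescope

variable {N : ℕ} {hN : 0 < N} {π : GState N → ℝ}

lemma scanVar_mod (hN : 0 < N) (k m : ℕ) :
    scanVar N hN (k * N + m + 1) = ⟨m % N, Nat.mod_lt _ hN⟩ := by
  unfold scanVar
  apply Fin.ext
  show (k * N + m + 1 - 1) % N = m % N
  have h1 : k * N + m + 1 - 1 = k * N + m := by omega
  rw [h1, Nat.add_comm (k * N) m, Nat.add_mul_mod_self_right]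

lemma weight_sweep_step (hg : HerdedGibbs N hN π) (j : ℕ) (hj : j < N) (z : GState N)
    (k : ℕ) :
    hg.W ((k + 1) * N + j) ⟨j, hj⟩ z = hg.W (k * N + j) ⟨j, hj⟩ z +
      (if (∀ j', j' ≠ (⟨j, hj⟩ : Fin N) → hg.X (k * N + j) j' = z j') then
        condProb π ⟨j, hj⟩ z true
          - (if hg.X (k * N + j + 1) ⟨j, hj⟩ = true then (1:ℝ) else 0)
      else 0) := by
  set v : Fin N := ⟨j, hj⟩ with hv
  have hsv : scanVar N hN (k * N + j + 1) = v := scanVar_eq hN k j hj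
  -- step 1 : the update at substep j+1
  have hstep1 : hg.W (k * N + j + 1) v z = hg.W (k * N + j) v z +
      (if (∀ j', j' ≠ v → hg.X (k * N + j) j' = z j') then
        condProb π v z true - (if hg.X (k * N + j + 1) v = true then (1:ℝ) else 0)
      else 0) := by
    by_cases hA : ∀ j', j' ≠ v → hg.X (k * N + j) j' = z j'
    · have ha := hg.w_active (k * N + j) z
        (by rw [hsv]; exact fun j' h => (hA j' h).symm)
      rw [hsv] at ha
      rw [if_pos hA, ha]; ring
    · have hf := hg.w_frozen (k * N + j) v z (by
        rintro ⟨_, h2⟩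
        exact hA fun j' hj' => (h2 j' hj').symm)
      rw [if_neg hA, hf, add_zero]
  -- step 2 : frozen through the rest of the sweep
  have hfrozen : ∀ d, d + 1 ≤ N → hg.W (k * N + j + 1 + d) v z = hg.W (k * N + j + 1) v z := by
    intro d
    induction d with
    | zero => intro _; rfl
    | succ d ih =>
      intro hd
      have hne : (j + d + 1) % N ≠ j := by
        rcases lt_or_ge (j + d + 1) N with h | h
        · rw [Nat.mod_eq_of_lt h]; omega
        · have h2 : j + d + 1 - N < N := by omega
          have h3 : (j + d + 1) % N = j + d + 1 - N := by
            conv_lhs => rw [show j + d + 1 = (j + d + 1 - N) + 1 * N by omega]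
            rw [Nat.add_mul_mod_self_right, Nat.mod_eq_of_lt h2]
          rw [h3]; omega
      have hsv2 : scanVar N hN (k * N + (j + d + 1) + 1) = ⟨(j + d + 1) % N, Nat.mod_lt _ hN⟩ :=
        scanVar_mod hN k (j + d + 1)
      have harith : k * N + (j + d + 1) + 1 = (k * N + j + 1 + d) + 1 := by omega
      rw [harith] at hsv2
      have hf := hg.w_frozen (k * N + j + 1 + d) v z (by
        rintro ⟨h1, _⟩
        rw [hsv2] at h1
        exact hne (congrArg Fin.val h1).symm)
      have : k * N + j + 1 + (d + 1) = (k * N + j + 1 + d) + 1 := by omega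
      rw [this, hf, ih (by omega)]
  have harith2 : (k + 1) * N + j = k * N + j + 1 + (N - 1) := by
    have := hN; cases N with
    | zero => omega
    | succ n => ring_nf; omega
  rw [harith2, hfrozen (N - 1) (by omega), hstep1]

lemma count_accuracy (hg : HerdedGibbs N hN π) (hπ0 : ∀ x, 0 ≤ π x)
    (τ T j : ℕ) (hj : j < N) (z : GState N) :
    |condProb π ⟨j, hj⟩ z true *
        (((Finset.Ico τ (τ + T)).filter fun k =>
          ∀ j', j' ≠ (⟨j, hj⟩ : Fin N) → hg.X (k * N + j) j' = z j').card : ℝ)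
      - (((Finset.Ico τ (τ + T)).filter fun k =>
          (∀ j', j' ≠ (⟨j, hj⟩ : Fin N) → hg.X (k * N + j) j' = z j')
            ∧ hg.X (k * N + j + 1) ⟨j, hj⟩ = true).card : ℝ)| < 3 := by
  classical
  have htel : ∑ k ∈ Finset.Ico τ (τ + T),
      (if (∀ j', j' ≠ (⟨j, hj⟩ : Fin N) → hg.X (k * N + j) j' = z j') then
        condProb π ⟨j, hj⟩ z true
          - (if hg.X (k * N + j + 1) ⟨j, hj⟩ = true then (1:ℝ) else 0) else 0)
      = hg.W ((τ + T) * N + j) ⟨j, hj⟩ z - hg.W (τ * N + j) ⟨j, hj⟩ z := by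
    have hk : ∀ k, (if (∀ j', j' ≠ (⟨j, hj⟩ : Fin N) → hg.X (k * N + j) j' = z j') then
        condProb π ⟨j, hj⟩ z true
          - (if hg.X (k * N + j + 1) ⟨j, hj⟩ = true then (1:ℝ) else 0) else 0)
        = hg.W ((k + 1) * N + j) ⟨j, hj⟩ z - hg.W (k * N + j) ⟨j, hj⟩ z := by
      intro k
      rw [weight_sweep_step hg j hj z k]; ring
    rw [Finset.sum_congr rfl (fun k _ => hk k)]
    rw [Finset.sum_Ico_eq_sum_range]
    simp only [Nat.add_sub_cancel_left]
    have := Finset.sum_range_sub (fun i => hg.W ((τ + i) * N + j) ⟨j, hj⟩ z) T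
    simpa [add_assoc] using this
  have hsum : ∑ k ∈ Finset.Ico τ (τ + T),
      (if (∀ j', j' ≠ (⟨j, hj⟩ : Fin N) → hg.X (k * N + j) j' = z j') then
        condProb π ⟨j, hj⟩ z true
          - (if hg.X (k * N + j + 1) ⟨j, hj⟩ = true then (1:ℝ) else 0) else 0)
      = condProb π ⟨j, hj⟩ z true *
          (((Finset.Ico τ (τ + T)).filter fun k =>
            ∀ j', j' ≠ (⟨j, hj⟩ : Fin N) → hg.X (k * N + j) j' = z j').card : ℝ)
        - (((Finset.Ico τ (τ + T)).filter fun k =>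
            (∀ j', j' ≠ (⟨j, hj⟩ : Fin N) → hg.X (k * N + j) j' = z j')
              ∧ hg.X (k * N + j + 1) ⟨j, hj⟩ = true).card : ℝ) := by
    rw [← Finset.sum_filter]
    rw [Finset.sum_sub_distrib]
    congr 1
    · rw [Finset.sum_const, nsmul_eq_mul, mul_comm]
    · rw [Finset.sum_boole, ← Finset.filter_filter]
  have key := hsum.symm.trans htel
  rw [key]
  have hb1 := w_bounds hg hπ0 ((τ + T) * N + j) ⟨j, hj⟩ z
  have hb2 := w_bounds hg hπ0 (τ * N + j) ⟨j, hj⟩ z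
  rw [abs_lt]
  constructor
  · linarith [hb1.1, hb2.2]
  · linarith [hb1.2, hb2.1]

end Telescope
section MatrixTV

variable {α : Type*} [Fintype α] [DecidableEq α]

/-- Non-expansiveness of a nonnegative substochastic matrix in L¹. -/
lemma vecMul_l1_nonexpansive (K : Matrix α α ℝ) (hK0 : ∀ x y, 0 ≤ K x y)
    (hK1 : ∀ x, ∑ y, K x y ≤ 1) (g : α → ℝ) :
    ∑ y, |Matrix.vecMul g K y| ≤ ∑ x, |g x| := by
  have hv : ∀ y, Matrix.vecMul g K y = ∑ x, g x * K x y := by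
    intro y; simp [Matrix.vecMul, dotProduct]
  calc ∑ y, |Matrix.vecMul g K y| ≤ ∑ y, ∑ x, |g x| * K x y := by
        apply Finset.sum_le_sum
        intro y _
        rw [hv]
        calc |∑ x, g x * K x y| ≤ ∑ x, |g x * K x y| := Finset.abs_sum_le_sum_abs _ _
        _ = ∑ x, |g x| * K x y := by
            apply Finset.sum_congr rfl
            intro x _
            rw [abs_mul, abs_of_nonneg (hK0 x y)]
  _ = ∑ x, |g x| * ∑ y, K x y := by rw [Finset.sum_comm]; simp [Finset.mul_sum]
  _ ≤ ∑ x, |g x| * 1 := by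
        apply Finset.sum_le_sum
        intro x _
        exact mul_le_mul_of_nonneg_left (hK1 x) (abs_nonneg _)
  _ = ∑ x, |g x| := by simp

/-- Products of nonnegative substochastic matrices are nonnegative substochastic. -/
lemma list_prod_substochastic (L : List (Matrix α α ℝ))
    (h : ∀ K ∈ L, (∀ x y, 0 ≤ K x y) ∧ (∀ x, ∑ y, K x y ≤ 1)) :
    (∀ x y, 0 ≤ L.prod x y) ∧ (∀ x, ∑ y, L.prod x y ≤ 1) := by
  classical
  induction L with
  | nil =>
    constructor
    · intro x y
      rw [List.prod_nil, Matrix.one_apply]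
      split <;> norm_num
    · intro x
      rw [List.prod_nil]
      have : ∑ y, (1 : Matrix α α ℝ) x y = 1 := by simp [Matrix.one_apply]
      rw [this]
  | cons K L ih =>
    have hK := h K (List.mem_cons_self)
    have hL := ih (fun M hM => h M (List.mem_cons_of_mem _ hM))
    rw [List.prod_cons]
    constructor
    · intro x y
      rw [Matrix.mul_apply]
      exact Finset.sum_nonneg fun z _ => mul_nonneg (hK.1 x z) (hL.1 z y)
    · intro x
      simp only [Matrix.mul_apply]
      rw [Finset.sum_comm]
      calc ∑ z, ∑ y, K x z * L.prod z y = ∑ z, K x z * ∑ y, L.prod z y := by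
            simp [Finset.mul_sum]
      _ ≤ ∑ z, K x z * 1 := by
            apply Finset.sum_le_sum
            intro z _
            exact mul_le_mul_of_nonneg_left (hL.2 z) (hK.1 x z)
      _ ≤ 1 := by simpa using hK.2 x

/-- If each matrix in a list fixes a row vector, so does the product. -/
lemma list_prod_fixes (L : List (Matrix α α ℝ)) (w : α → ℝ)
    (h : ∀ K ∈ L, Matrix.vecMul w K = w) : Matrix.vecMul w L.prod = w := by
  induction L with
  | nil => simp [Matrix.vecMul_one]
  | cons K L ih =>
    rw [List.prod_cons, ← Matrix.vecMul_vecMul, h K (List.mem_cons_self),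
      ih (fun M hM => h M (List.mem_cons_of_mem _ hM))]

/-- Assembly: accumulating per-step L¹ errors through a product of substochastic
matrices. -/
lemma list_prod_error (L : List (Matrix α α ℝ)) (ε : ℝ)
    (hsub : ∀ K ∈ L, (∀ x y, 0 ≤ K x y) ∧ (∀ x, ∑ y, K x y ≤ 1)) :
    ∀ (Q : ℕ → α → ℝ),
      (∀ (j : ℕ) (h : j < L.length),
        ∑ y, |Matrix.vecMul (Q j) (L.get ⟨j, h⟩) y - Q (j + 1) y| ≤ ε) →
      ∑ y, |Matrix.vecMul (Q 0) L.prod y - Q L.length y| ≤ L.length * ε := by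
  induction L with
  | nil =>
    intro Q _
    simp [Matrix.vecMul_one]
  | cons K L ih =>
    intro Q hQ
    have hK := hsub K (List.mem_cons_self)
    have hL := list_prod_substochastic L (fun M hM => hsub M (List.mem_cons_of_mem _ hM))
    have h0 := hQ 0 (by simp)
    simp only [List.get] at h0
    have hstep : ∀ y, Matrix.vecMul (Q 0) (K :: L).prod y
        = Matrix.vecMul (Matrix.vecMul (Q 0) K) L.prod y := by
      intro y; rw [List.prod_cons, ← Matrix.vecMul_vecMul]
    have htri : ∀ y, |Matrix.vecMul (Q 0) (K :: L).prod y - Q (K :: L).length y|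
        ≤ |Matrix.vecMul (Matrix.vecMul (Q 0) K) L.prod y
            - Matrix.vecMul (Q 1) L.prod y|
          + |Matrix.vecMul (Q 1) L.prod y - Q (K :: L).length y| := by
      intro y
      rw [hstep y]
      exact abs_sub_le _ _ _
    calc ∑ y, |Matrix.vecMul (Q 0) (K :: L).prod y - Q (K :: L).length y|
        ≤ ∑ y, (|Matrix.vecMul (Matrix.vecMul (Q 0) K) L.prod y
            - Matrix.vecMul (Q 1) L.prod y|
          + |Matrix.vecMul (Q 1) L.prod y - Q (K :: L).length y|) :=
          Finset.sum_le_sum fun y _ => htri y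
    _ = (∑ y, |Matrix.vecMul (Matrix.vecMul (Q 0) K) L.prod y
            - Matrix.vecMul (Q 1) L.prod y|)
          + ∑ y, |Matrix.vecMul (Q 1) L.prod y - Q (K :: L).length y| :=
          Finset.sum_add_distrib
    _ ≤ ε + L.length * ε := by
        apply add_le_add
        · have hdiff : ∀ y, Matrix.vecMul (Matrix.vecMul (Q 0) K) L.prod y
              - Matrix.vecMul (Q 1) L.prod y
              = Matrix.vecMul (fun x => Matrix.vecMul (Q 0) K x - Q 1 x) L.prod y := by
            intro y
            simp [Matrix.vecMul, dotProduct, sub_mul, Finset.sum_sub_distrib]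
          calc ∑ y, |Matrix.vecMul (Matrix.vecMul (Q 0) K) L.prod y
              - Matrix.vecMul (Q 1) L.prod y|
              = ∑ y, |Matrix.vecMul (fun x => Matrix.vecMul (Q 0) K x - Q 1 x) L.prod y| := by
                apply Finset.sum_congr rfl
                intro y _
                rw [hdiff y]
          _ ≤ ∑ x, |Matrix.vecMul (Q 0) K x - Q 1 x| :=
                vecMul_l1_nonexpansive L.prod hL.1 hL.2 _
          _ ≤ ε := h0
        · have := ih (fun M hM => hsub M (List.mem_cons_of_mem _ hM)) (fun n => Q (n + 1))
            (fun j hj => by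
              have := hQ (j + 1) (by simpa using Nat.succ_lt_succ hj)
              simpa using this)
          simpa using this
    _ = (K :: L).length * ε := by
        simp [List.length_cons]
        ring

/-- Dobrushin contraction for row vectors with equal total mass. -/
lemma dobrushin_contract (K : Matrix α α ℝ) (η : ℝ)
    (hd : ∀ x x', ∑ y, |K x y - K x' y| ≤ 2 * η)
    (μ ν : α → ℝ) (hsum : ∑ x, μ x = ∑ x, ν x) :
    ∑ y, |Matrix.vecMul μ K y - Matrix.vecMul ν K y| ≤ η * ∑ x, |μ x - ν x| := by
  classical
  set g : α → ℝ := fun x => μ x - ν x with hgdef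
  have hg0 : ∑ x, g x = 0 := by
    simp only [hgdef, Finset.sum_sub_distrib]
    rw [hsum]; ring
  set gp : α → ℝ := fun x => max (g x) 0 with hgp
  set gm : α → ℝ := fun x => max (-g x) 0 with hgm
  have hgp0 : ∀ x, 0 ≤ gp x := fun x => le_max_right _ _
  have hgm0 : ∀ x, 0 ≤ gm x := fun x => le_max_right _ _
  have hsplit : ∀ x, g x = gp x - gm x := by
    intro x
    simp only [hgp, hgm]
    rcases le_total (g x) 0 with h | h
    · rw [max_eq_right h, max_eq_left (by linarith)]; ring
    · rw [max_eq_left h, max_eq_right (by linarith)]; ring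
  have habs : ∀ x, |g x| = gp x + gm x := by
    intro x
    simp only [hgp, hgm]
    rcases le_total (g x) 0 with h | h
    · rw [max_eq_right h, max_eq_left (by linarith), abs_of_nonpos h]; ring
    · rw [max_eq_left h, max_eq_right (by linarith), abs_of_nonneg h]; ring
  set m : ℝ := ∑ x, gp x with hm
  have hm' : ∑ x, gm x = m := by
    have h1 : ∑ x, (gp x - gm x) = 0 := by
      calc ∑ x, (gp x - gm x) = ∑ x, g x := Finset.sum_congr rfl fun x _ => (hsplit x).symm
      _ = 0 := hg0
    rw [Finset.sum_sub_distrib] at h1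
    simp only [← hm] at h1
    linarith
  have hm0 : 0 ≤ m := Finset.sum_nonneg fun x _ => hgp0 x
  have hv : ∀ y, Matrix.vecMul μ K y - Matrix.vecMul ν K y = ∑ x, g x * K x y := by
    intro y
    simp [Matrix.vecMul, dotProduct, hgdef, sub_mul, Finset.sum_sub_distrib]
  have habsg : ∑ x, |μ x - ν x| = 2 * m := by
    calc ∑ x, |μ x - ν x| = ∑ x, (gp x + gm x) := Finset.sum_congr rfl fun x _ => habs x
    _ = m + m := by rw [Finset.sum_add_distrib, hm', ← hm]
    _ = 2 * m := by ring
  rcases eq_or_lt_of_le hm0 with hmz | hmpos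
  · -- m = 0 : μ = ν
    have hgz : ∀ x, g x = 0 := by
      intro x
      have h1 : gp x = 0 :=
        (Finset.sum_eq_zero_iff_of_nonneg (fun x _ => hgp0 x)).mp hmz.symm x (Finset.mem_univ x)
      have h2 : gm x = 0 := by
        have := (Finset.sum_eq_zero_iff_of_nonneg (fun x _ => hgm0 x)).mp
          (hm'.trans hmz.symm) x (Finset.mem_univ x)
        exact this
      rw [hsplit x, h1, h2]; ring
    have hL : ∑ y, |Matrix.vecMul μ K y - Matrix.vecMul ν K y| = 0 := by
      apply Finset.sum_eq_zero
      intro y _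
      rw [hv y, Finset.sum_eq_zero (fun x _ => by rw [hgz x, zero_mul]), abs_zero]
    rw [hL, habsg, ← hmz]
    simp
  · -- main case
    -- key identity
    have hkey : ∀ y, ∑ x, g x * K x y
        = (1 / m) * ∑ x, ∑ x', gp x * gm x' * (K x y - K x' y) := by
      intro y
      have hinner : ∀ x, ∑ x', gp x * gm x' * (K x y - K x' y)
          = gp x * K x y * m - gp x * (∑ x', gm x' * K x' y) := by
        intro x
        calc ∑ x', gp x * gm x' * (K x y - K x' y)
            = ∑ x', (gm x' * (gp x * K x y) - gp x * (gm x' * K x' y)) := by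
              apply Finset.sum_congr rfl; intro x' _; ring
        _ = (∑ x', gm x') * (gp x * K x y) - gp x * (∑ x', gm x' * K x' y) := by
              rw [Finset.sum_sub_distrib, Finset.sum_mul, ← Finset.mul_sum]
        _ = gp x * K x y * m - gp x * (∑ x', gm x' * K x' y) := by rw [hm']; ring
      have e1 : ∑ x, ∑ x', gp x * gm x' * (K x y - K x' y)
          = m * (∑ x, gp x * K x y) - m * (∑ x, gm x * K x y) := by
        rw [Finset.sum_congr rfl (fun x _ => hinner x), Finset.sum_sub_distrib]
        congr 1
        · rw [← Finset.sum_mul, mul_comm]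
        · rw [← Finset.sum_mul, ← hm]
      have e2 : ∑ x, g x * K x y = (∑ x, gp x * K x y) - ∑ x, gm x * K x y := by
        rw [← Finset.sum_sub_distrib]
        apply Finset.sum_congr rfl
        intro x _
        rw [hsplit x]; ring
      rw [e1, e2]
      field_simp
    calc ∑ y, |Matrix.vecMul μ K y - Matrix.vecMul ν K y|
        = ∑ y, (1 / m) * |∑ x, ∑ x', gp x * gm x' * (K x y - K x' y)| := by
          apply Finset.sum_congr rfl
          intro y _
          rw [hv y, hkey y, abs_mul, abs_of_nonneg (by positivity : (0:ℝ) ≤ 1 / m)]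
    _ ≤ ∑ y, (1 / m) * ∑ x, ∑ x', gp x * gm x' * |K x y - K x' y| := by
          apply Finset.sum_le_sum
          intro y _
          apply mul_le_mul_of_nonneg_left _ (by positivity)
          calc |∑ x, ∑ x', gp x * gm x' * (K x y - K x' y)|
              ≤ ∑ x, |∑ x', gp x * gm x' * (K x y - K x' y)| :=
                Finset.abs_sum_le_sum_abs _ _
          _ ≤ ∑ x, ∑ x', gp x * gm x' * |K x y - K x' y| := by
                apply Finset.sum_le_sum
                intro x _
                calc |∑ x', gp x * gm x' * (K x y - K x' y)|
                    ≤ ∑ x', |gp x * gm x' * (K x y - K x' y)| :=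
                      Finset.abs_sum_le_sum_abs _ _
                _ = ∑ x', gp x * gm x' * |K x y - K x' y| := by
                      apply Finset.sum_congr rfl
                      intro x' _
                      rw [abs_mul, abs_mul, abs_of_nonneg (hgp0 x),
                        abs_of_nonneg (hgm0 x')]
    _ = (1 / m) * ∑ x, ∑ x', gp x * gm x' * ∑ y, |K x y - K x' y| := by
          rw [← Finset.mul_sum]
          congr 1
          rw [Finset.sum_comm]
          apply Finset.sum_congr rfl
          intro x _
          rw [Finset.sum_comm]
          apply Finset.sum_congr rfl
          intro x' _
          rw [← Finset.mul_sum]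
    _ ≤ (1 / m) * ∑ x, ∑ x', gp x * gm x' * (2 * η) := by
          apply mul_le_mul_of_nonneg_left _ (by positivity)
          apply Finset.sum_le_sum
          intro x _
          apply Finset.sum_le_sum
          intro x' _
          exact mul_le_mul_of_nonneg_left (hd x x') (mul_nonneg (hgp0 x) (hgm0 x'))
    _ = (1 / m) * (m * m * (2 * η)) := by
          congr 1
          have hx : ∀ x, ∑ x', gp x * gm x' * (2 * η) = gp x * (m * (2 * η)) := by
            intro x
            calc ∑ x', gp x * gm x' * (2 * η)
                = ∑ x', gm x' * (gp x * (2 * η)) := by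
                  apply Finset.sum_congr rfl; intro x' _; ring
            _ = (∑ x', gm x') * (gp x * (2 * η)) := by rw [← Finset.sum_mul]
            _ = gp x * (m * (2 * η)) := by rw [hm']; ring
          calc ∑ x, ∑ x', gp x * gm x' * (2 * η)
              = ∑ x, gp x * (m * (2 * η)) := Finset.sum_congr rfl fun x _ => hx x
          _ = (∑ x, gp x) * (m * (2 * η)) := by rw [← Finset.sum_mul]
          _ = m * m * (2 * η) := by rw [← hm]; ring
    _ = η * (2 * m) := by field_simp
    _ = η * ∑ x, |μ x - ν x| := by rw [habsg]

end MatrixTV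
set_option maxHeartbeats 1000000

section Kernel

variable {N : ℕ} {π : GState N → ℝ}

lemma filter_offAgree₁ (i : Fin N) (x : GState N) :
    (Finset.univ.filter fun y : GState N => ∀ j, j ≠ i → x j = y j)
      = {Function.update x i true, Function.update x i false} := by
  ext y
  simp only [Finset.mem_filter, Finset.mem_univ, true_and, Finset.mem_insert,
    Finset.mem_singleton]
  constructor
  · intro h
    have : y = Function.update x i (y i) := by
      funext j
      by_cases hj : j = i
      · subst hj; simp
      · rw [Function.update_of_ne hj]; exact (h j hj).symm
    cases hb : y i
    · right; rw [this, hb]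
    · left; rw [this, hb]
  · intro h j hj
    rcases h with h | h <;> rw [h, Function.update_of_ne hj]

lemma filter_offAgree₂ (i : Fin N) (x : GState N) :
    (Finset.univ.filter fun y : GState N => ∀ j, j ≠ i → y j = x j)
      = {Function.update x i true, Function.update x i false} := by
  rw [← filter_offAgree₁ i x]
  apply Finset.filter_congr
  intro y _
  constructor
  · intro h j hj; exact (h j hj).symm
  · intro h j hj; exact (h j hj).symm

lemma update_ne_update (i : Fin N) (x : GState N) :
    Function.update x i true ≠ Function.update x i false := by
  intro h
  have := congrFun h i
  simp at this

lemma stepKernel_nonneg (hπ0 : ∀ x, 0 ≤ π x) (i : Fin N) (x y : GState N) :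
    0 ≤ stepKernel π i x y := by
  unfold stepKernel
  split
  · exact condProb_nonneg π hπ0 i x _
  · exact le_refl 0

lemma stepKernel_rowsum (hπ0 : ∀ x, 0 ≤ π x) (i : Fin N) (x : GState N) :
    ∑ y, stepKernel π i x y
      = condProb π i x true + condProb π i x false := by
  unfold stepKernel
  rw [← Finset.sum_filter, filter_offAgree₁ i x,
    Finset.sum_pair (update_ne_update i x)]
  simp

lemma stepKernel_rowsum_le (hπ0 : ∀ x, 0 ≤ π x) (i : Fin N) (x : GState N) :
    ∑ y, stepKernel π i x y ≤ 1 := by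
  rw [stepKernel_rowsum hπ0 i x]
  by_cases hs : π (Function.update x i true) + π (Function.update x i false) = 0
  · unfold condProb
    rw [hs]
    simp
  · rw [condProb_add π hs]

lemma stepKernel_fixes (hπ0 : ∀ x, 0 ≤ π x) (i : Fin N) :
    Matrix.vecMul π (stepKernel π i) = π := by
  funext y
  have hv : Matrix.vecMul π (stepKernel π i) y = ∑ x, π x * stepKernel π i x y := by
    simp [Matrix.vecMul, dotProduct]
  rw [hv]
  have hterm : ∀ x, π x * stepKernel π i x y
      = if (∀ j, j ≠ i → x j = y j) then π x * condProb π i y (y i) else 0 := by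
    intro x
    unfold stepKernel
    by_cases hxy : ∀ j, j ≠ i → x j = y j
    · rw [if_pos hxy, if_pos hxy, condProb_congr π hxy (y i)]
    · rw [if_neg hxy, if_neg hxy, mul_zero]
  rw [Finset.sum_congr rfl fun x _ => hterm x, ← Finset.sum_filter,
    filter_offAgree₂ i y, Finset.sum_pair (update_ne_update i y)]
  have hupd : ∀ b, Function.update (Function.update y i b) i (y i) = y := by
    intro b
    funext j
    by_cases hj : j = i
    · subst hj; simp
    · simp [Function.update_of_ne hj]
  by_cases hs : π (Function.update y i true) + π (Function.update y i false) = 0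
  · have h1 : π (Function.update y i true) = 0 := by
      have := hπ0 (Function.update y i true)
      have := hπ0 (Function.update y i false)
      linarith
    have h2 : π (Function.update y i false) = 0 := by
      have := hπ0 (Function.update y i true)
      have := hπ0 (Function.update y i false)
      linarith
    have hy : π y = 0 := by
      cases hb : y i
      · have hyy : y = Function.update y i false := by
          rw [← hb]; exact (Function.update_eq_self i y).symm
        rw [← hyy] at h2; exact h2
      · have hyy : y = Function.update y i true := by
          rw [← hb]; exact (Function.update_eq_self i y).symm
        rw [← hyy] at h1; exact h1
    rw [h1, h2, hy]; ring
  · unfold condProb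
    rw [Function.update_eq_self i y]
    field_simp

lemma sweepKernel_fixes (hπ0 : ∀ x, 0 ≤ π x) :
    Matrix.vecMul π (sweepKernel π) = π := by
  unfold sweepKernel
  apply list_prod_fixes
  intro K hK
  rw [List.mem_ofFn] at hK
  obtain ⟨i, rfl⟩ := hK
  exact stepKernel_fixes hπ0 i

lemma sweepKernel_substochastic (hπ0 : ∀ x, 0 ≤ π x) :
    (∀ x y, 0 ≤ sweepKernel π x y) ∧ (∀ x, ∑ y, sweepKernel π x y ≤ 1) := by
  unfold sweepKernel
  apply list_prod_substochastic
  intro K hK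
  rw [List.mem_ofFn] at hK
  obtain ⟨i, rfl⟩ := hK
  exact ⟨stepKernel_nonneg hπ0 i, stepKernel_rowsum_le hπ0 i⟩

lemma tvDist_le_dobrushin {α : Type*} [Fintype α] [Nonempty α]
    (K : Matrix α α ℝ) (x x' : α) : tvDist (K x) (K x') ≤ dobrushin K := by
  unfold dobrushin
  calc tvDist (K x) (K x') ≤ ⨆ x', tvDist (K x) (K x') :=
        le_ciSup (f := fun z => tvDist (K x) (K z))
          (Set.Finite.bddAbove (Set.finite_range _)) x'
  _ ≤ ⨆ x, ⨆ x', tvDist (K x) (K x') :=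
        le_ciSup (f := fun z => ⨆ x', tvDist (K z) (K x'))
          (Set.Finite.bddAbove (Set.finite_range _)) x

lemma dobrushin_nonneg {α : Type*} [Fintype α] [Nonempty α] (K : Matrix α α ℝ) :
    0 ≤ dobrushin K := by
  have := tvDist_le_dobrushin K (Classical.arbitrary α) (Classical.arbitrary α)
  have h0 : tvDist (K (Classical.arbitrary α)) (K (Classical.arbitrary α)) = 0 := by
    unfold tvDist; simp
  linarith

end Kernel
section Substep

variable {N : ℕ} {hN : 0 < N} {π : GState N → ℝ}

lemma count_swap (hg : HerdedGibbs N hN π) (τ T t : ℕ) (v : Fin N) (y : GState N) :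
    ∑ x ∈ Finset.univ.filter (fun x : GState N => ∀ j, j ≠ v → x j = y j),
      (((Finset.Ico τ (τ + T)).filter fun k => hg.X (k * N + t) = x).card : ℝ)
    = (((Finset.Ico τ (τ + T)).filter fun k =>
        ∀ j, j ≠ v → hg.X (k * N + t) j = y j).card : ℝ) := by
  classical
  rw [← Nat.cast_sum]
  congr 1
  calc ∑ x ∈ Finset.univ.filter (fun x : GState N => ∀ j, j ≠ v → x j = y j),
      ((Finset.Ico τ (τ + T)).filter fun k => hg.X (k * N + t) = x).card
      = ∑ x ∈ Finset.univ.filter (fun x : GState N => ∀ j, j ≠ v → x j = y j),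
        ∑ k ∈ Finset.Ico τ (τ + T), (if hg.X (k * N + t) = x then 1 else 0) := by
        apply Finset.sum_congr rfl
        intro x _
        exact Finset.card_filter _ _
  _ = ∑ k ∈ Finset.Ico τ (τ + T),
        ∑ x ∈ Finset.univ.filter (fun x : GState N => ∀ j, j ≠ v → x j = y j),
          (if hg.X (k * N + t) = x then 1 else 0) := Finset.sum_comm
  _ = ∑ k ∈ Finset.Ico τ (τ + T),
        (if (∀ j, j ≠ v → hg.X (k * N + t) j = y j) then 1 else 0) := by
        apply Finset.sum_congr rfl
        intro k _
        rw [Finset.sum_ite_eq]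
        simp [Finset.mem_filter]
  _ = ((Finset.Ico τ (τ + T)).filter fun k =>
        ∀ j, j ≠ v → hg.X (k * N + t) j = y j).card := (Finset.card_filter _ _).symm

lemma substep_l1 (hg : HerdedGibbs N hN π) (hπ0 : ∀ x, 0 ≤ π x)
    (τ T : ℕ) (hT : 0 < T) (j : ℕ) (hj : j < N) :
    ∑ y, |Matrix.vecMul
        (fun x => (((Finset.Ico τ (τ + T)).filter fun k =>
          hg.X (k * N + j) = x).card : ℝ) / T)
        (stepKernel π ⟨j, hj⟩) y
      - (((Finset.Ico τ (τ + T)).filter fun k =>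
          hg.X (k * N + (j + 1)) = y).card : ℝ) / T|
      ≤ 3 * (Fintype.card (GState N)) / T := by
  classical
  have hT' : (0:ℝ) < T := by exact_mod_cast hT
  have hkey : ∀ y : GState N, |Matrix.vecMul
        (fun x => (((Finset.Ico τ (τ + T)).filter fun k =>
          hg.X (k * N + j) = x).card : ℝ) / T)
        (stepKernel π ⟨j, hj⟩) y
      - (((Finset.Ico τ (τ + T)).filter fun k =>
          hg.X (k * N + (j + 1)) = y).card : ℝ) / T| ≤ 3 / T := by
    intro y
    set v : Fin N := ⟨j, hj⟩ with hv
    set n : ℕ := ((Finset.Ico τ (τ + T)).filter fun k =>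
      ∀ j', j' ≠ v → hg.X (k * N + j) j' = y j').card with hn
    set mT : ℕ := ((Finset.Ico τ (τ + T)).filter fun k =>
      (∀ j', j' ≠ v → hg.X (k * N + j) j' = y j')
        ∧ hg.X (k * N + j + 1) v = true).card with hmT
    -- Step A : value of the vecMul
    have hA : Matrix.vecMul
        (fun x => (((Finset.Ico τ (τ + T)).filter fun k =>
          hg.X (k * N + j) = x).card : ℝ) / T)
        (stepKernel π v) y = condProb π v y (y v) * (n : ℝ) / T := by
      have h1 : Matrix.vecMul
          (fun x => (((Finset.Ico τ (τ + T)).filter fun k =>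
            hg.X (k * N + j) = x).card : ℝ) / T)
          (stepKernel π v) y
          = ∑ x, (((Finset.Ico τ (τ + T)).filter fun k =>
              hg.X (k * N + j) = x).card : ℝ) / T * stepKernel π v x y := by
        simp [Matrix.vecMul, dotProduct]
      rw [h1]
      have h2 : ∀ x : GState N,
          (((Finset.Ico τ (τ + T)).filter fun k =>
            hg.X (k * N + j) = x).card : ℝ) / T * stepKernel π v x y
          = if (∀ j', j' ≠ v → x j' = y j') then
              (((Finset.Ico τ (τ + T)).filter fun k =>
                hg.X (k * N + j) = x).card : ℝ) * condProb π v y (y v) / T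
            else 0 := by
        intro x
        unfold stepKernel
        by_cases hxy : ∀ j', j' ≠ v → x j' = y j'
        · rw [if_pos hxy, if_pos hxy, condProb_congr π hxy (y v)]; ring
        · rw [if_neg hxy, if_neg hxy, mul_zero]
      rw [Finset.sum_congr rfl fun x _ => h2 x, ← Finset.sum_filter]
      have h3 : ∑ x ∈ Finset.univ.filter (fun x : GState N => ∀ j', j' ≠ v → x j' = y j'),
          (((Finset.Ico τ (τ + T)).filter fun k =>
            hg.X (k * N + j) = x).card : ℝ) * condProb π v y (y v) / T
          = (∑ x ∈ Finset.univ.filter (fun x : GState N => ∀ j', j' ≠ v → x j' = y j'),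
              (((Finset.Ico τ (τ + T)).filter fun k =>
                hg.X (k * N + j) = x).card : ℝ)) * condProb π v y (y v) / T := by
        rw [← Finset.sum_div, ← Finset.sum_mul]
      rw [h3, count_swap hg τ T j v y, ← hn]
      ring
    -- Step B : identification of the count at substep j+1
    have hB : ((Finset.Ico τ (τ + T)).filter fun k => hg.X (k * N + (j + 1)) = y)
        = ((Finset.Ico τ (τ + T)).filter fun k =>
            (∀ j', j' ≠ v → hg.X (k * N + j) j' = y j')
              ∧ hg.X (k * N + j + 1) v = y v) := by
      apply Finset.filter_congr
      intro k _
      have hsv : scanVar N hN (k * N + j + 1) = v := scanVar_eq hN k j hj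
      have harith : k * N + (j + 1) = k * N + j + 1 := by omega
      rw [harith]
      constructor
      · intro h
        constructor
        · intro j' hj'
          have hso := hg.step_other (k * N + j) j' (by rw [hsv]; exact hj')
          rw [← hso]
          exact congrFun h j'
        · exact congrFun h v
      · rintro ⟨hoff, hvv⟩
        funext j'
        by_cases hj' : j' = v
        · subst hj'; exact hvv
        · have hso := hg.step_other (k * N + j) j' (by rw [hsv]; exact hj')
          rw [hso]
          exact hoff j' hj'
    -- Step C : count accuracy in both boolean cases
    have hC : |condProb π v y (y v) * (n : ℝ)
        - (((Finset.Ico τ (τ + T)).filter fun k =>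
            (∀ j', j' ≠ v → hg.X (k * N + j) j' = y j')
              ∧ hg.X (k * N + j + 1) v = y v).card : ℝ)| ≤ 3 := by
      have hacc := count_accuracy hg hπ0 τ T j hj y
      rw [← hv, ← hn, ← hmT] at hacc
      cases hyv : y v
      · -- y v = false
        have hsplit : mT + ((Finset.Ico τ (τ + T)).filter fun k =>
            (∀ j', j' ≠ v → hg.X (k * N + j) j' = y j')
              ∧ hg.X (k * N + j + 1) v = false).card = n := by
          rw [hmT, hn]
          have h1 := Finset.card_filter_add_card_filter_not
            (s := (Finset.Ico τ (τ + T)).filter fun k =>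
              ∀ j', j' ≠ v → hg.X (k * N + j) j' = y j')
            (p := fun k => hg.X (k * N + j + 1) v = true)
          rw [Finset.filter_filter, Finset.filter_filter] at h1
          simp only [Bool.not_eq_true] at h1
          exact h1
        by_cases hn0 : n = 0
        · have hm0 : ((Finset.Ico τ (τ + T)).filter fun k =>
              (∀ j', j' ≠ v → hg.X (k * N + j) j' = y j')
                ∧ hg.X (k * N + j + 1) v = false).card = 0 := by omega
          rw [hn0, hm0]
          simp
        · -- the conditioning class is visited, so the denominator is positive
          have hne : ((Finset.Ico τ (τ + T)).filter fun k =>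
              ∀ j', j' ≠ v → hg.X (k * N + j) j' = y j').Nonempty := by
            rw [← Finset.card_pos, ← hn]
            omega
          obtain ⟨k, hk⟩ := hne
          rw [Finset.mem_filter] at hk
          have hagree : ∀ j', j' ≠ v → hg.X (k * N + j) j' = y j' := hk.2
          have hXk := support_pos hg hπ0 (k * N + j)
          have hupd : ∀ b, Function.update y v b = Function.update (hg.X (k * N + j)) v b :=
            fun b => update_eq_of_offAgree (fun j' hj' => (hagree j' hj').symm) b
          have hXle : π (hg.X (k * N + j)) ≤ π (Function.update y v true)
              + π (Function.update y v false) := by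
            rw [hupd true, hupd false]
            cases hxb : hg.X (k * N + j) v
            · have : Function.update (hg.X (k * N + j)) v false = hg.X (k * N + j) := by
                rw [← hxb]; exact Function.update_eq_self v _
              rw [this]
              linarith [hπ0 (Function.update (hg.X (k * N + j)) v true)]
            · have : Function.update (hg.X (k * N + j)) v true = hg.X (k * N + j) := by
                rw [← hxb]; exact Function.update_eq_self v _
              rw [this]
              linarith [hπ0 (Function.update (hg.X (k * N + j)) v false)]
          have hs : π (Function.update y v true) + π (Function.update y v false) ≠ 0 := by
            intro h
            rw [h] at hXle
            linarith
          have hpf : condProb π v y false = 1 - condProb π v y true := by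
            have := condProb_add π hs
            linarith
          have hcast : (((Finset.Ico τ (τ + T)).filter fun k =>
              (∀ j', j' ≠ v → hg.X (k * N + j) j' = y j')
                ∧ hg.X (k * N + j + 1) v = false).card : ℝ) = (n : ℝ) - (mT : ℝ) := by
            have : ((Finset.Ico τ (τ + T)).filter fun k =>
              (∀ j', j' ≠ v → hg.X (k * N + j) j' = y j')
                ∧ hg.X (k * N + j + 1) v = false).card = n - mT := by omega
            rw [this]
            have hle : mT ≤ n := by omega
            push_cast [hle]
            ring
          rw [hcast, hpf]
          have heq : (1 - condProb π v y true) * (n : ℝ) - ((n : ℝ) - (mT : ℝ))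
              = -(condProb π v y true * (n : ℝ) - (mT : ℝ)) := by ring
          rw [heq, abs_neg]
          exact le_of_lt hacc
      · -- y v = true
        exact le_of_lt hacc
    -- Combine
    rw [hA, congrArg Finset.card hB]
    rw [div_sub_div_same, abs_div, abs_of_pos hT']
    exact (div_le_div_iff_of_pos_right hT').mpr hC
  calc ∑ y, |Matrix.vecMul
        (fun x => (((Finset.Ico τ (τ + T)).filter fun k =>
          hg.X (k * N + j) = x).card : ℝ) / T)
        (stepKernel π ⟨j, hj⟩) y
      - (((Finset.Ico τ (τ + T)).filter fun k =>
          hg.X (k * N + (j + 1)) = y).card : ℝ) / T|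
      ≤ ∑ _y : GState N, (3:ℝ) / T := Finset.sum_le_sum fun y _ => hkey y
  _ = (Fintype.card (GState N) : ℝ) * (3 / T) := by
      rw [Finset.sum_const, nsmul_eq_mul, Finset.card_univ]
  _ = 3 * (Fintype.card (GState N)) / T := by ring

end Substep
section Sweep

variable {N : ℕ} {hN : 0 < N} {π : GState N → ℝ}

lemma shift_count (hg : HerdedGibbs N hN π) (τ T : ℕ) (y : GState N) :
    ((Finset.Ico τ (τ + T)).filter fun k => hg.X (k * N + N) = y).card
      = ((Finset.Ico (τ + 1) (τ + 1 + T)).filter fun k => hg.X (k * N) = y).card := by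
  classical
  rw [Finset.card_filter, Finset.card_filter,
    Finset.sum_Ico_eq_sum_range, Finset.sum_Ico_eq_sum_range]
  simp only [Nat.add_sub_cancel_left]
  apply Finset.sum_congr rfl
  intro i _
  have h1 : (τ + i) * N + N = (τ + 1 + i) * N := by ring
  rw [h1]

lemma empDist_nonneg {X : ℕ → GState N} (τ T : ℕ) (x : GState N) :
    0 ≤ empDist X τ T x := by
  unfold empDist
  positivity

lemma empDist_sum {X : ℕ → GState N} (τ T : ℕ) (hT : 0 < T) :
    ∑ x, empDist X τ T x = 1 := by
  classical
  unfold empDist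
  rw [← Finset.sum_div]
  have hcount : ∑ x : GState N,
      (((Finset.Ico τ (τ + T)).filter fun k => X (k * N) = x).card : ℝ) = T := by
    rw [← Nat.cast_sum]
    have : ∑ x : GState N, ((Finset.Ico τ (τ + T)).filter fun k => X (k * N) = x).card
        = ∑ k ∈ Finset.Ico τ (τ + T), 1 := by
      calc ∑ x : GState N, ((Finset.Ico τ (τ + T)).filter fun k => X (k * N) = x).card
          = ∑ x : GState N, ∑ k ∈ Finset.Ico τ (τ + T), (if X (k * N) = x then 1 else 0) := by
            apply Finset.sum_congr rfl
            intro x _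
            exact Finset.card_filter _ _
      _ = ∑ k ∈ Finset.Ico τ (τ + T), ∑ x : GState N, (if X (k * N) = x then 1 else 0) :=
            Finset.sum_comm
      _ = ∑ k ∈ Finset.Ico τ (τ + T), 1 := by
            apply Finset.sum_congr rfl
            intro k _
            rw [Finset.sum_ite_eq]
            simp
    rw [this]
    simp
  rw [hcount]
  field_simp

lemma tvDist_triangle (a b c : GState N → ℝ) :
    tvDist a c ≤ tvDist a b + tvDist b c := by
  unfold tvDist
  have h : ∑ x, |a x - c x| ≤ (∑ x, |a x - b x|) + ∑ x, |b x - c x| := by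
    rw [← Finset.sum_add_distrib]
    apply Finset.sum_le_sum
    intro x _
    exact abs_sub_le _ _ _
  linarith

lemma tvDist_le_one (μ : GState N → ℝ) (hμ0 : ∀ x, 0 ≤ μ x) (hμ1 : ∑ x, μ x ≤ 1)
    (hπ0 : ∀ x, 0 ≤ π x) (hπ1 : ∑ x, π x = 1) : tvDist μ π ≤ 1 := by
  unfold tvDist
  have h : ∑ x, |μ x - π x| ≤ (∑ x, μ x) + ∑ x, π x := by
    rw [← Finset.sum_add_distrib]
    apply Finset.sum_le_sum
    intro x _
    rw [abs_sub_comm]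
    calc |π x - μ x| ≤ |π x| + |μ x| := abs_sub _ _
    _ = π x + μ x := by rw [abs_of_nonneg (hπ0 x), abs_of_nonneg (hμ0 x)]
    _ = μ x + π x := by ring
  rw [hπ1] at h
  linarith

lemma sweep_l1 (hg : HerdedGibbs N hN π) (hπ0 : ∀ x, 0 ≤ π x) (τ T : ℕ) (hT : 0 < T) :
    ∑ y, |Matrix.vecMul (empDist hg.X τ T) (sweepKernel π) y - empDist hg.X (τ + 1) T y|
      ≤ N * (3 * (Fintype.card (GState N) : ℝ) / T) := by
  classical
  set Q : ℕ → GState N → ℝ := fun t y =>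
    (((Finset.Ico τ (τ + T)).filter fun k => hg.X (k * N + t) = y).card : ℝ) / T with hQ
  have hQ0 : Q 0 = empDist hg.X τ T := by
    funext y
    simp [hQ, empDist]
  have hQN : Q N = empDist hg.X (τ + 1) T := by
    funext y
    simp only [hQ, empDist]
    rw [shift_count hg τ T y]
  have hlen : (List.ofFn fun i : Fin N => stepKernel π i).length = N :=
    List.length_ofFn
  have hmain := list_prod_error (α := GState N)
      (List.ofFn fun i : Fin N => stepKernel π i)
      (3 * (Fintype.card (GState N) : ℝ) / T)
      (by
        intro K hK
        rw [List.mem_ofFn] at hK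
        obtain ⟨i, rfl⟩ := hK
        exact ⟨stepKernel_nonneg hπ0 i, stepKernel_rowsum_le hπ0 i⟩)
      Q
      (by
        intro j hjlen
        have hj : j < N := by rwa [hlen] at hjlen
        have hget : (List.ofFn fun i : Fin N => stepKernel π i).get ⟨j, hjlen⟩
            = stepKernel π ⟨j, hj⟩ := by
          rw [List.get_ofFn]
          congr 1
        rw [hget]
        exact substep_l1 hg hπ0 τ T hT j hj)
  rw [hlen, hQ0, hQN] at hmain
  have hsw : sweepKernel π = (List.ofFn fun i : Fin N => stepKernel π i).prod := rfl
  rw [hsw]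
  exact hmain

lemma tv_rec (hg : HerdedGibbs N hN π) (hπ0 : ∀ x, 0 ≤ π x) (hπ1 : ∑ x, π x = 1)
    (T : ℕ) (hT : 0 < T) (t : ℕ) :
    tvDist (empDist hg.X (t + 1) T) π
      ≤ dobrushin (sweepKernel π) * tvDist (empDist hg.X t T) π
        + 3 * N * (Fintype.card (GState N) : ℝ) / T := by
  classical
  have hne : Nonempty (GState N) := ⟨fun _ => true⟩
  set K := sweepKernel π with hK
  set η := dobrushin K with hη
  have hT' : (0:ℝ) < T := by exact_mod_cast hT
  -- contraction step
  have hfix : Matrix.vecMul π K = π := sweepKernel_fixes hπ0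
  have hcontr : ∑ y, |Matrix.vecMul (empDist hg.X t T) K y - Matrix.vecMul π K y|
      ≤ η * ∑ x, |empDist hg.X t T x - π x| := by
    apply dobrushin_contract
    · intro x x'
      have := tvDist_le_dobrushin K x x'
      unfold tvDist at this
      linarith
    · rw [empDist_sum t T hT, hπ1]
  have hswp := sweep_l1 hg hπ0 t T hT
  have htri := tvDist_triangle (empDist hg.X (t + 1) T)
    (fun y => Matrix.vecMul (empDist hg.X t T) K y) π
  have h1 : tvDist (empDist hg.X (t + 1) T)
      (fun y => Matrix.vecMul (empDist hg.X t T) K y)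
      ≤ (N * (3 * (Fintype.card (GState N) : ℝ) / T)) / 2 := by
    unfold tvDist
    have heq : ∑ x, |empDist hg.X (t + 1) T x - Matrix.vecMul (empDist hg.X t T) K x|
        = ∑ y, |Matrix.vecMul (empDist hg.X t T) K y - empDist hg.X (t + 1) T y| := by
      apply Finset.sum_congr rfl
      intro y _
      rw [abs_sub_comm]
    rw [heq]
    linarith
  have h2' : ∑ y, |Matrix.vecMul (empDist hg.X t T) K y - π y|
      ≤ η * ∑ x, |empDist hg.X t T x - π x| := by
    have h := hcontr
    rw [hfix] at h
    exact h
  have h2 : tvDist (fun y => Matrix.vecMul (empDist hg.X t T) K y) π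
      ≤ η * tvDist (empDist hg.X t T) π := by
    unfold tvDist
    rw [← mul_div_assoc]
    exact (div_le_div_iff_of_pos_right two_pos).mpr h2'
  have hfin : (N * (3 * (Fintype.card (GState N) : ℝ) / T)) / 2
      ≤ 3 * N * (Fintype.card (GState N) : ℝ) / T := by
    have heq : (N : ℝ) * (3 * (Fintype.card (GState N) : ℝ) / T)
        = 3 * N * (Fintype.card (GState N) : ℝ) / T := by ring
    have hnn : (0:ℝ) ≤ (N : ℝ) * (3 * (Fintype.card (GState N) : ℝ) / T) := by positivity
    linarith
  calc tvDist (empDist hg.X (t + 1) T) π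
      ≤ tvDist (empDist hg.X (t + 1) T) (fun y => Matrix.vecMul (empDist hg.X t T) K y)
        + tvDist (fun y => Matrix.vecMul (empDist hg.X t T) K y) π := htri
  _ ≤ (N * (3 * (Fintype.card (GState N) : ℝ) / T)) / 2
        + η * tvDist (empDist hg.X t T) π := add_le_add h1 h2
  _ ≤ η * tvDist (empDist hg.X t T) π
        + 3 * N * (Fintype.card (GState N) : ℝ) / T := by linarith

end Sweep

/-- Main theorem: O(1/T) convergence of herded Gibbs on complete graphs:
for a fully connected graph, herded Gibbs with a fixed scanning order whose corresponding
Gibbs sweep kernel has Dobrushin coefficient η < 1 admits constants l > 0 and B > 0 such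
that d_v(P_T⁽ᵗ⁾ − π) ≤ λ/T for all T ≥ T* := 2B/l and τ > τ*(T), where
λ = 2N(1+η)/(l(1−η)) and τ*(T) = log_{2/(1+η)}((1−η)lT/(4N)). -/
theorem herded_gibbs_main_convergence {N : ℕ} (hN : 0 < N)
    (π : GState N → ℝ) (hπ0 : ∀ x, 0 ≤ π x) (hπ1 : ∑ x, π x = 1)
    (hg : HerdedGibbs N hN π)
    (hη : dobrushin (sweepKernel π) < 1) :
    ∃ l B : ℝ, 0 < l ∧ 0 < B ∧
      ∀ T τ : ℕ, 2 * B / l ≤ (T : ℝ) →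
        Real.logb (2 / (1 + dobrushin (sweepKernel π)))
            ((1 - dobrushin (sweepKernel π)) * l * (T : ℝ) / (4 * N)) < (τ : ℝ) →
        tvDist (empDist hg.X τ T) π
          ≤ (2 * (N : ℝ) * (1 + dobrushin (sweepKernel π))
              / (l * (1 - dobrushin (sweepKernel π)))) / (T : ℝ) := by
  classical
  have hne : Nonempty (GState N) := ⟨fun _ => true⟩
  set η := dobrushin (sweepKernel π) with hηdef
  have hη0 : 0 ≤ η := dobrushin_nonneg _
  have hη1 : (0:ℝ) < 1 - η := by linarith
  have h1η : (0:ℝ) < 1 + η := by linarith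
  have hA1 : (1:ℝ) ≤ (Fintype.card (GState N) : ℝ) := by
    have := Fintype.card_pos (α := GState N)
    exact_mod_cast this
  have hN1 : (1:ℝ) ≤ (N:ℝ) := by exact_mod_cast hN
  set A : ℝ := (Fintype.card (GState N) : ℝ) with hAdef
  set δ : ℝ := 3 * N * A with hδdef
  have hδpos : (0:ℝ) < δ := by
    rw [hδdef]
    nlinarith
  set l : ℝ := (1 - η)^2 / δ with hldef
  set B : ℝ := 2 * N / (1 - η) with hBdef
  have hlpos : 0 < l := by
    rw [hldef]
    exact div_pos (pow_pos hη1 2) hδpos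
  have hBpos : 0 < B := by
    rw [hBdef]
    exact div_pos (by linarith) hη1
  refine ⟨l, B, hlpos, hBpos, ?_⟩
  intro T τ hTB hτlog
  have hT0 : (0:ℝ) < T :=
    lt_of_lt_of_le (div_pos (by linarith) hlpos) hTB
  have hT : 0 < T := by exact_mod_cast hT0
  -- geometric recursion
  have hgeom : ∀ t : ℕ, tvDist (empDist hg.X t T) π ≤ η^t + δ/((1-η)*T) := by
    intro t
    induction t with
    | zero =>
      have h0 : tvDist (empDist hg.X 0 T) π ≤ 1 :=
        tvDist_le_one _ (fun x => empDist_nonneg 0 T x)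
          (le_of_eq (empDist_sum 0 T hT)) hπ0 hπ1
      have hnn : (0:ℝ) ≤ δ/((1-η)*T) :=
        le_of_lt (div_pos hδpos (mul_pos hη1 hT0))
      simp only [pow_zero]
      linarith
    | succ t ih =>
      have hrec := tv_rec hg hπ0 hπ1 T hT t
      rw [← hηdef] at hrec
      have hδT : 3 * (N:ℝ) * (Fintype.card (GState N) : ℝ) / (T:ℝ) = δ / T := by
        rw [hδdef, hAdef]
      rw [hδT] at hrec
      have hmul : η * tvDist (empDist hg.X t T) π ≤ η * (η^t + δ/((1-η)*T)) :=
        mul_le_mul_of_nonneg_left ih hη0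
      have hexp2 : δ/((1-η)*T) - η * (δ/((1-η)*T)) = δ/T := by
        field_simp
      have hkey : η * (η^t + δ/((1-η)*T)) + δ/T ≤ η^(t+1) + δ/((1-η)*T) := by
        have hdist : η * (η^t + δ/((1-η)*T)) = η*η^t + η*(δ/((1-η)*T)) := by ring
        have hps : η^(t+1) = η*η^t := by rw [pow_succ]; ring
        linarith
      linarith
  have hd := hgeom τ
  -- consequences of the logb hypothesis
  have hb1 : 1 < 2/(1+η) := by
    rw [lt_div_iff₀ h1η]
    linarith
  have h4Npos : (0:ℝ) < 4*N := by linarith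
  have hargpos : 0 < (1-η) * l * (T:ℝ) / (4*N) :=
    div_pos (mul_pos (mul_pos hη1 hlpos) hT0) h4Npos
  have h1 : (1-η) * l * (T:ℝ) / (4*N) < (2/(1+η))^(τ:ℝ) :=
    (Real.logb_lt_iff_lt_rpow hb1 hargpos).mp hτlog
  rw [Real.rpow_natCast] at h1
  have h4N : 4*(N:ℝ) ≤ (1-η) * l * T := by
    have hkey : 2 * B / l = 4*(N:ℝ)/((1-η)*l) := by
      rw [hBdef]
      field_simp
      ring
    rw [hkey] at hTB
    rw [div_le_iff₀ (mul_pos hη1 hlpos)] at hTB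
    nlinarith [hTB]
  have harg1 : 1 ≤ (1-η) * l * (T:ℝ) / (4*N) := by
    rw [le_div_iff₀ h4Npos]
    linarith
  have hτ1 : 1 ≤ τ := by
    rcases Nat.eq_zero_or_pos τ with h0 | hpos
    · exfalso
      have hlogb0 : 0 ≤ Real.logb (2/(1+η)) ((1-η)*l*(T:ℝ)/(4*N)) :=
        Real.logb_nonneg hb1 harg1
      rw [h0] at hτlog
      simp at hτlog
      linarith
    · exact hpos
  -- power bound
  have hbpos : (0:ℝ) < 2/(1+η) := by linarith
  have hbτpos : 0 < (2/(1+η))^τ := pow_pos hbpos τ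
  have hηb0 : 0 ≤ η * (2/(1+η)) := mul_nonneg hη0 (le_of_lt hbpos)
  have hηb1 : η * (2/(1+η)) ≤ 1 := by
    rw [mul_comm, div_mul_eq_mul_div, div_le_one h1η]
    linarith
  have hpowτ : η^τ ≤ (η * (2/(1+η))) * (4*(N:ℝ)/((1-η)*l*T)) := by
    have e0 : η^τ = (η * (2/(1+η)))^τ / (2/(1+η))^τ := by
      rw [mul_pow, mul_div_assoc, div_self (ne_of_gt hbτpos), mul_one]
    have e2 : (η * (2/(1+η)))^τ ≤ η * (2/(1+η)) := by
      calc (η * (2/(1+η)))^τ ≤ (η * (2/(1+η)))^1 :=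
            pow_le_pow_of_le_one hηb0 hηb1 hτ1
      _ = η * (2/(1+η)) := pow_one _
    have e3 : 1/(2/(1+η))^τ ≤ 1/((1-η)*l*(T:ℝ)/(4*N)) :=
      one_div_le_one_div_of_le hargpos (le_of_lt h1)
    have e4 : 1/((1-η)*l*(T:ℝ)/(4*N)) = 4*(N:ℝ)/((1-η)*l*T) := by
      rw [one_div_div]
    rw [e0, div_eq_mul_one_div]
    calc (η * (2/(1+η)))^τ * (1/(2/(1+η))^τ)
        ≤ (η * (2/(1+η))) * (1/((1-η)*l*(T:ℝ)/(4*N))) :=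
          mul_le_mul e2 e3 (le_of_lt (one_div_pos.mpr hbτpos)) hηb0
    _ = (η * (2/(1+η))) * (4*(N:ℝ)/((1-η)*l*T)) := by rw [e4]
  -- final arithmetic
  have hδl : δ * l = (1-η)^2 := by
    rw [hldef]
    field_simp
  have hfinal : (η * (2/(1+η))) * (4*(N:ℝ)/((1-η)*l*T)) + δ/((1-η)*T)
      ≤ (2 * (N:ℝ) * (1+η) / (l * (1-η))) / T := by
    rw [← sub_nonneg]
    have hexpand : (2 * (N:ℝ) * (1+η) / (l * (1-η))) / T
        - ((η * (2/(1+η))) * (4*(N:ℝ)/((1-η)*l*T)) + δ/((1-η)*T))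
        = (2*(N:ℝ)*(1+η)^2 - 8*η*N - δ*l*(1+η)) / ((1+η)*((1-η)*(l*T))) := by
      field_simp
      ring
    rw [hexpand]
    apply div_nonneg
    · rw [hδl]
      nlinarith [mul_nonneg (sq_nonneg (1-η)) (show (0:ℝ) ≤ 2*(N:ℝ)-1-η by linarith)]
    · exact le_of_lt (mul_pos h1η (mul_pos hη1 (mul_pos hlpos hT0)))
  calc tvDist (empDist hg.X τ T) π ≤ η^τ + δ/((1-η)*T) := hd
  _ ≤ (η * (2/(1+η))) * (4*(N:ℝ)/((1-η)*l*T)) + δ/((1-η)*T) := by linarith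
  _ ≤ (2 * (N:ℝ) * (1+η) / (l * (1-η))) / T := hfinal
end

section
/- (Corollary: O(log T / T) without burn-in) Under the hypotheses of the main theorem, if samples are collected from the very beginning (τ = 0), then d_v(P_T^{(0)} − π) ≤ (λ + τ*(T))/T = O(log(T)/T) for all T ≥ T* + τ*(T*). -/
open Finset

namespace HGAux

open Function

variable {N : ℕ}

/-- Any state agreeing with `x` off `i` is one of the two updates of `x` at `i`. -/
lemma eq_update_of_agree {x y : GState N} {i : Fin N} (h : ∀ j, j ≠ i → x j = y j) :
    y = Function.update x i (y i) := by
  funext j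
  by_cases hj : j = i
  · subst hj; simp
  · simp [Function.update_of_ne hj, (h j hj).symm]

lemma update_ne_update (x : GState N) (i : Fin N) :
    Function.update x i true ≠ Function.update x i false := by
  intro h
  have := congrFun h i
  simp at this

/-- Sum over all states of a function vanishing off the `i`-class of `x`. -/
lemma sum_class (x : GState N) (i : Fin N) (F : GState N → ℝ)
    (hF : ∀ y, ¬ (∀ j, j ≠ i → x j = y j) → F y = 0) :
    ∑ y, F y = F (Function.update x i true) + F (Function.update x i false) := by
  rw [← Finset.sum_pair (update_ne_update x i)]
  refine (Finset.sum_subset (Finset.subset_univ _) ?_).symm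
  intro y _ hy
  apply hF
  intro hagr
  have hy' : y = Function.update x i (y i) := eq_update_of_agree (fun j hj => (hagr j hj))
  apply hy
  cases hb : y i
  · simp [Finset.mem_insert]
    right; rw [hy', hb]
  · simp [Finset.mem_insert]
    left; rw [hy', hb]

variable (π : GState N → ℝ)

lemma condProb_congr {x x' : GState N} (i : Fin N) (h : ∀ j, j ≠ i → x j = x' j) (b : Bool) :
    condProb π i x b = condProb π i x' b := by
  have hu : ∀ c : Bool, Function.update x i c = Function.update x' i c := by
    intro c; funext j
    by_cases hj : j = i
    · subst hj; simp
    · simp [Function.update_of_ne hj, h j hj]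
  unfold condProb
  rw [hu, hu, hu]

lemma condProb_nonneg (hπ0 : ∀ x, 0 ≤ π x) (i : Fin N) (x : GState N) (b : Bool) : 0 ≤ condProb π i x b :=
  div_nonneg (hπ0 _) (add_nonneg (hπ0 _) (hπ0 _))

lemma condProb_le_one (hπ0 : ∀ x, 0 ≤ π x) (i : Fin N) (x : GState N) (b : Bool) : condProb π i x b ≤ 1 := by
  unfold condProb
  rcases eq_or_lt_of_le (add_nonneg (hπ0 (Function.update x i true)) (hπ0 (Function.update x i false))) with h | h
  · rw [← h, div_zero]; norm_num
  · apply div_le_one_of_le₀ _ h.le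
    cases b
    · nlinarith [hπ0 (Function.update x i true)]
    · nlinarith [hπ0 (Function.update x i false)]

lemma condProb_add {x : GState N} {i : Fin N}
    (hS : 0 < π (Function.update x i true) + π (Function.update x i false)) :
    condProb π i x true + condProb π i x false = 1 := by
  unfold condProb
  rw [← add_div, div_self hS.ne']

end HGAux
namespace HGAux

variable {N : ℕ}

/-- left action of a matrix on a row vector. -/
noncomputable def vK (ν : GState N → ℝ) (K : Matrix (GState N) (GState N) ℝ) :
    GState N → ℝ := fun y => ∑ x, ν x * K x y

lemma vK_one (ν : GState N → ℝ) : vK ν 1 = ν := by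
  funext y
  unfold vK
  rw [Finset.sum_eq_single y]
  · simp [Matrix.one_apply]
  · intro x _ hx; simp [Matrix.one_apply, hx]
  · intro h; exact absurd (Finset.mem_univ y) h

lemma vK_mul (ν : GState N → ℝ) (A B : Matrix (GState N) (GState N) ℝ) :
    vK ν (A * B) = vK (vK ν A) B := by
  funext y
  unfold vK
  simp only [Matrix.mul_apply, Finset.mul_sum, Finset.sum_mul]
  rw [Finset.sum_comm]
  congr 1; funext z
  congr 1; funext x
  ring

lemma vK_sub (ν ν' : GState N → ℝ) (K : Matrix (GState N) (GState N) ℝ) (y : GState N) :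
    vK ν K y - vK ν' K y = vK (fun x => ν x - ν' x) K y := by
  unfold vK
  rw [← Finset.sum_sub_distrib]
  congr 1; funext x; ring

lemma l1_vK_le (ζ : GState N → ℝ) (K : Matrix (GState N) (GState N) ℝ)
    (h0 : ∀ x y, 0 ≤ K x y) (h1 : ∀ x, ∑ y, K x y ≤ 1) :
    ∑ y, |vK ζ K y| ≤ ∑ x, |ζ x| := by
  calc ∑ y, |vK ζ K y| ≤ ∑ y, ∑ x, |ζ x| * K x y := by
        apply Finset.sum_le_sum
        intro y _
        refine (Finset.abs_sum_le_sum_abs _ _).trans ?_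
        apply Finset.sum_le_sum
        intro x _
        rw [abs_mul, abs_of_nonneg (h0 x y)]
    _ = ∑ x, |ζ x| * ∑ y, K x y := by
        rw [Finset.sum_comm]
        congr 1; funext x; rw [Finset.mul_sum]
    _ ≤ ∑ x, |ζ x| * 1 := by
        apply Finset.sum_le_sum
        intro x _
        exact mul_le_mul_of_nonneg_left (h1 x) (abs_nonneg _)
    _ = ∑ x, |ζ x| := by simp

variable (π : GState N → ℝ)

lemma stepKernel_nonneg (hπ0 : ∀ x, 0 ≤ π x) (i : Fin N) (x y : GState N) :
    0 ≤ stepKernel π i x y := by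
  unfold stepKernel
  split
  · exact condProb_nonneg π hπ0 i x _
  · exact le_refl 0

lemma stepKernel_rowsum (hπ0 : ∀ x, 0 ≤ π x) (i : Fin N) (x : GState N) :
    ∑ y, stepKernel π i x y ≤ 1 := by
  rw [sum_class x i _ (fun y hy => by unfold stepKernel; rw [if_neg hy])]
  unfold stepKernel
  rw [if_pos, if_pos]
  · rw [Function.update_self, Function.update_self]
    rcases eq_or_lt_of_le (add_nonneg (hπ0 (Function.update x i true)) (hπ0 (Function.update x i false))) with h | h
    · unfold condProb; rw [← h, div_zero, div_zero]; norm_num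
    · rw [condProb_add π h]
  · intro j hj; rw [Function.update_of_ne hj]
  · intro j hj; rw [Function.update_of_ne hj]

lemma pi_stationary_step (hπ0 : ∀ x, 0 ≤ π x) (i : Fin N) :
    vK π (stepKernel π i) = π := by
  funext y
  unfold vK
  have hvan : ∀ x, ¬ (∀ j, j ≠ i → y j = x j) → π x * stepKernel π i x y = 0 := by
    intro x hx
    unfold stepKernel
    rw [if_neg, mul_zero]
    intro hagr
    exact hx (fun j hj => (hagr j hj).symm)
  rw [sum_class y i _ hvan]
  have hker : ∀ b : Bool, stepKernel π i (Function.update y i b) y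
      = condProb π i y (y i) := by
    intro b
    unfold stepKernel
    rw [if_pos (fun j hj => Function.update_of_ne hj _ _)]
    exact condProb_congr π i (fun j hj => Function.update_of_ne hj _ _) (y i)
  rw [hker, hker, ← add_mul]
  set S := π (Function.update y i true) + π (Function.update y i false) with hS
  rcases eq_or_lt_of_le (add_nonneg (hπ0 (Function.update y i true)) (hπ0 (Function.update y i false))) with h | h
  · have h1 : π (Function.update y i true) = 0 ∧ π (Function.update y i false) = 0 := by
      constructor <;> nlinarith [hπ0 (Function.update y i true), hπ0 (Function.update y i false)]
    have hy : π y = 0 := by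
      have := Function.update_eq_self i y
      cases hb : y i
      · rw [← this, hb]; exact h1.2
      · rw [← this, hb]; exact h1.1
    rw [hy, hS, ← h, zero_mul]
  · unfold condProb
    rw [← hS]
    have : Function.update y i (y i) = y := Function.update_eq_self i y
    rw [this, mul_div_cancel₀ _ (ne_of_gt h)]

lemma vK_prod_fixed (ν : GState N → ℝ) :
    ∀ (L : List (Matrix (GState N) (GState N) ℝ)), (∀ A ∈ L, vK ν A = ν) →
      vK ν L.prod = ν := by
  intro L
  induction L with
  | nil => intro _; simp [vK_one]
  | cons A L ih =>
      intro h
      rw [List.prod_cons, vK_mul, h A List.mem_cons_self]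
      exact ih (fun B hB => h B (List.mem_cons_of_mem A hB))

lemma pi_stationary (hπ0 : ∀ x, 0 ≤ π x) : vK π (sweepKernel π) = π := by
  unfold sweepKernel
  apply vK_prod_fixed
  intro A hA
  rw [List.mem_ofFn] at hA
  obtain ⟨i, rfl⟩ := hA
  exact pi_stationary_step π hπ0 i

end HGAux
namespace HGAux

variable {N : ℕ}

lemma tvDist_self {α : Type*} [Fintype α] (f : α → ℝ) : tvDist f f = 0 := by
  unfold tvDist; simp

lemma tvDist_le_dobrushin (K : Matrix (GState N) (GState N) ℝ) (x x' : GState N) :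
    tvDist (K x) (K x') ≤ dobrushin K := by
  unfold dobrushin
  have h1 : tvDist (K x) (K x') ≤ ⨆ y', tvDist (K x) (K y') :=
    le_ciSup (f := fun y' => tvDist (K x) (K y'))
      (Set.Finite.bddAbove (Set.finite_range _)) x'
  exact h1.trans (le_ciSup (f := fun z => ⨆ y', tvDist (K z) (K y'))
      (Set.Finite.bddAbove (Set.finite_range _)) x)

lemma dobrushin_nonneg (K : Matrix (GState N) (GState N) ℝ) : 0 ≤ dobrushin K := by
  have x0 : GState N := fun _ => false
  have := tvDist_le_dobrushin K x0 x0
  rw [tvDist_self] at this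
  exact this

lemma dob_contract (K : Matrix (GState N) (GState N) ℝ) (ζ : GState N → ℝ)
    (hζ : ∑ x, ζ x = 0) :
    ∑ y, |vK ζ K y| ≤ dobrushin K * ∑ x, |ζ x| := by
  classical
  have hη0 : 0 ≤ dobrushin K := dobrushin_nonneg K
  set η := dobrushin K with hηdef
  let ζp : GState N → ℝ := fun x => max (ζ x) 0
  let ζm : GState N → ℝ := fun x => max (-ζ x) 0
  have hsub : ∀ x, ζp x - ζm x = ζ x := by
    intro x; simp only [ζp, ζm, max_zero_sub_max_neg_zero_eq_self]
  have habs : ∀ x, ζp x + ζm x = |ζ x| := by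
    intro x; simp only [ζp, ζm, max_zero_add_max_neg_zero_eq_abs_self]
  have hp0 : ∀ x, 0 ≤ ζp x := fun x => le_max_right _ _
  have hm0 : ∀ x, 0 ≤ ζm x := fun x => le_max_right _ _
  have hM : ∑ x, ζm x = ∑ x, ζp x := by
    have h1 : ∑ x, (ζp x - ζm x) = 0 := by
      rw [Finset.sum_congr rfl (fun x _ => hsub x)]; exact hζ
    rw [Finset.sum_sub_distrib] at h1
    linarith
  have habs' : ∑ x, |ζ x| = 2 * ∑ x, ζp x := by
    rw [← Finset.sum_congr rfl (fun x _ => habs x), Finset.sum_add_distrib, hM]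
    ring
  have hvk : ∀ y, vK ζ K y = ∑ x, ζp x * K x y - ∑ x, ζm x * K x y := by
    intro y
    unfold vK
    rw [← Finset.sum_sub_distrib]
    refine Finset.sum_congr rfl (fun x _ => ?_)
    rw [← hsub x, sub_mul]
  rcases eq_or_lt_of_le (Finset.sum_nonneg (fun x _ => hp0 x) : (0:ℝ) ≤ ∑ x, ζp x)
    with h0 | h0
  · have hz : ∀ x, ζ x = 0 := by
      intro x
      have h1 : ζp x = 0 :=
        le_antisymm (by
          calc ζp x ≤ ∑ x', ζp x' :=
                Finset.single_le_sum (fun x' _ => hp0 x') (Finset.mem_univ x)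
            _ = 0 := h0.symm) (hp0 x)
      have h2 : ζm x = 0 := by
        have h2' : ζm x ≤ ∑ x', ζm x' :=
          Finset.single_le_sum (fun x' _ => hm0 x') (Finset.mem_univ x)
        rw [hM, ← h0] at h2'
        linarith [hm0 x]
      rw [← hsub x, h1, h2]; ring
    have hv : ∀ y, vK ζ K y = 0 := by
      intro y; unfold vK
      exact Finset.sum_eq_zero (fun x _ => by rw [hz x, zero_mul])
    rw [Finset.sum_congr rfl (fun y _ => by rw [hv y, abs_zero]), Finset.sum_const,
      habs', ← h0]
    simp
  · set S := ∑ x, ζp x with hSdef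
    have key : ∀ y, S * vK ζ K y
        = ∑ x, ∑ x', ζp x * ζm x' * (K x y - K x' y) := by
      intro y
      have e : ∑ x, ∑ x', ζp x * ζm x' * (K x y - K x' y)
          = (∑ x, ζp x * K x y) * (∑ x', ζm x')
            - (∑ x, ζp x) * (∑ x', ζm x' * K x' y) := by
        rw [Finset.sum_mul_sum, Finset.sum_mul_sum, ← Finset.sum_sub_distrib]
        refine Finset.sum_congr rfl (fun x _ => ?_)
        rw [← Finset.sum_sub_distrib]
        refine Finset.sum_congr rfl (fun x' _ => ?_)
        ring
      rw [e, hM, hvk y, ← hSdef]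
      ring
    have hb : ∀ y, S * |vK ζ K y|
        ≤ ∑ x, ∑ x', ζp x * ζm x' * |K x y - K x' y| := by
      intro y
      have h1 : S * |vK ζ K y| = |S * vK ζ K y| := by
        rw [abs_mul, abs_of_pos h0]
      rw [h1, key y]
      refine (Finset.abs_sum_le_sum_abs _ _).trans ?_
      refine Finset.sum_le_sum (fun x _ => ?_)
      refine (Finset.abs_sum_le_sum_abs _ _).trans ?_
      refine Finset.sum_le_sum (fun x' _ => ?_)
      rw [abs_mul, abs_of_nonneg (mul_nonneg (hp0 x) (hm0 x'))]
    have hrow : ∀ x x', ∑ y, |K x y - K x' y| ≤ 2 * η := by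
      intro x x'
      have := tvDist_le_dobrushin K x x'
      unfold tvDist at this
      rw [← hηdef] at this
      linarith
    have hsum : S * ∑ y, |vK ζ K y| ≤ 2 * η * S * S := by
      rw [Finset.mul_sum]
      calc ∑ y, S * |vK ζ K y|
          ≤ ∑ y, ∑ x, ∑ x', ζp x * ζm x' * |K x y - K x' y| :=
            Finset.sum_le_sum (fun y _ => hb y)
        _ = ∑ x, ∑ x', ζp x * ζm x' * ∑ y, |K x y - K x' y| := by
            rw [Finset.sum_comm]
            refine Finset.sum_congr rfl (fun x _ => ?_)
            rw [Finset.sum_comm]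
            refine Finset.sum_congr rfl (fun x' _ => ?_)
            rw [Finset.mul_sum]
        _ ≤ ∑ x, ∑ x', ζp x * ζm x' * (2 * η) := by
            refine Finset.sum_le_sum (fun x _ => ?_)
            refine Finset.sum_le_sum (fun x' _ => ?_)
            exact mul_le_mul_of_nonneg_left (hrow x x') (mul_nonneg (hp0 x) (hm0 x'))
        _ = ((∑ x, ζp x) * (∑ x', ζm x')) * (2 * η) := by
            rw [Finset.sum_mul_sum, Finset.sum_mul]
            refine Finset.sum_congr rfl (fun x _ => ?_)
            rw [Finset.sum_mul]
        _ = 2 * η * S * S := by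
            rw [hM, ← hSdef]; ring
    have h2 : ∑ y, |vK ζ K y| ≤ 2 * η * S :=
      (mul_le_mul_iff_right₀ h0).mp (by linarith)
    rw [habs']
    linarith

end HGAux
namespace HGAux

variable {N : ℕ} (hN : 0 < N) (π : GState N → ℝ) (hg : HerdedGibbs N hN π)

lemma scanVar_val (t : ℕ) : (scanVar N hN t).val = (t - 1) % N := rfl

lemma scanVar_shift (i k : ℕ) (hi : 1 ≤ i) :
    scanVar N hN (k * N + i) = scanVar N hN i := by
  unfold scanVar
  apply Fin.ext
  simp only
  have h1 : k * N + i - 1 = (i - 1) + k * N := by omega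
  rw [h1, Nat.add_mul_mod_self_right]

/-- Weights are frozen over an interval when the variable is not scanned. -/
lemma weight_const (iv : Fin N) (y : GState N) (t : ℕ) :
    ∀ s : ℕ, (∀ u, t < u → u ≤ t + s → scanVar N hN u ≠ iv) →
      hg.W (t + s) iv y = hg.W t iv y := by
  intro s
  induction s with
  | zero => intro _; rfl
  | succ s ih =>
      intro h
      have h1 : hg.W (t + s + 1) iv y = hg.W (t + s) iv y := by
        apply hg.w_frozen
        rintro ⟨h2, -⟩
        exact h (t + s + 1) (by omega) (by omega) h2.symm
      rw [show t + (s+1) = t + s + 1 from rfl, h1]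
      exact ih (fun u hu1 hu2 => h u hu1 (by omega))

variable (i : ℕ)

/-- Between two consecutive scans of variable `i-1`, its weights are frozen. -/
lemma weight_sweep_const (hi1 : 1 ≤ i) (hiN : i ≤ N) (iv : Fin N) (hiv : iv = scanVar N hN i) (y : GState N) (k : ℕ) :
    hg.W ((k+1) * N + (i - 1)) iv y = hg.W (k * N + i) iv y := by
  have h1 : (k+1) * N + (i - 1) = (k * N + i) + (N - 1) := by
    have hNN : (k+1) * N = k * N + N := by ring
    have := hN; omega
  rw [h1]
  apply weight_const
  intro u hu1 hu2 hsc
  -- u = k*N+i+s with 1 ≤ s ≤ N-1 ; scanVar u = iv would force N ∣ s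
  have e1 : (scanVar N hN u).val = (u - 1) % N := rfl
  have e2 : (scanVar N hN i).val = (i - 1) % N := rfl
  rw [hsc, hiv] at e1
  have hval : (u - 1) % N = (i - 1) % N := e1.symm.trans e2
  set s := u - (k * N + i) with hs
  have hus : u - 1 = (i - 1 + s) + k * N := by omega
  rw [hus, Nat.add_mul_mod_self_right] at hval
  have hsN : 1 ≤ s ∧ s ≤ N - 1 := by omega
  have hdvd : N ∣ s := by
    have h2 : (i - 1 + s) % N = (i - 1 + 0) % N := by simpa using hval
    have h3 : i - 1 + s ≡ i - 1 + 0 [MOD N] := h2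
    have h4 : s ≡ 0 [MOD N] := Nat.ModEq.add_left_cancel' (i-1) h3
    exact (Nat.modEq_zero_iff_dvd).mp h4
  obtain ⟨c, hc⟩ := hdvd
  cases c with
  | zero => omega
  | succ c =>
      have : N ≤ N * (c+1) := Nat.le_mul_of_pos_right N (by omega)
      omega

lemma weight_init_const (hi1 : 1 ≤ i) (hiN : i ≤ N) (iv : Fin N) (hiv : iv = scanVar N hN i) (y : GState N) :
    hg.W (i - 1) iv y = hg.W 0 iv y := by
  rw [show i - 1 = 0 + (i-1) from by omega]
  apply weight_const
  intro u hu1 hu2 hsc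
  have e1 : (scanVar N hN u).val = (u - 1) % N := rfl
  have e2 : (scanVar N hN i).val = (i - 1) % N := rfl
  rw [hsc, hiv] at e1
  have hval : (u - 1) % N = (i - 1) % N := e1.symm.trans e2
  have hu : u - 1 < i - 1 := by omega
  have hiN' : i - 1 < N := by omega
  rw [Nat.mod_eq_of_lt (by omega), Nat.mod_eq_of_lt hiN'] at hval
  omega

/-- One-sweep weight recursion for the two class members over context `x`. -/
lemma wrec (hi1 : 1 ≤ i) (hiN : i ≤ N) (x : GState N) (b : Bool) (k : ℕ) :
    hg.W ((k+1) * N + (i-1)) (scanVar N hN i) (Function.update x (scanVar N hN i) b)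
      = hg.W (k * N + (i-1)) (scanVar N hN i) (Function.update x (scanVar N hN i) b)
        + (if ∀ j, j ≠ scanVar N hN i → hg.X (k * N + (i-1)) j = x j then
            condProb π (scanVar N hN i) x true
              - (if hg.X (k * N + i) (scanVar N hN i) = true then 1 else 0)
           else 0) := by
  set iv := scanVar N hN i with hiv
  set y := Function.update x iv b with hy
  have ht : k * N + (i-1) + 1 = k * N + i := by omega
  have hsc : scanVar N hN (k * N + (i-1) + 1) = iv := by
    rw [ht, hiv]; exact scanVar_shift hN i k hi1
  rw [weight_sweep_const hN π hg i hi1 hiN iv hiv y k, ← ht]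
  by_cases hact : ∀ j, j ≠ iv → hg.X (k * N + (i-1)) j = x j
  · rw [if_pos hact]
    have hagr : ∀ j, j ≠ scanVar N hN (k * N + (i-1) + 1) → y j = hg.X (k * N + (i-1)) j := by
      rw [hsc]
      intro j hj
      rw [hy, Function.update_of_ne hj]
      exact (hact j hj).symm
    have := hg.w_active (k * N + (i-1)) y hagr
    rw [hsc] at this
    rw [this]
    have hcp : condProb π iv y true = condProb π iv x true := by
      apply condProb_congr
      intro j hj
      rw [hy, Function.update_of_ne hj]
    rw [hcp, ht]
    ring_nf
  · rw [if_neg hact, add_zero]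
    apply hg.w_frozen
    rintro ⟨-, hall⟩
    apply hact
    intro j hj
    have := hall j hj
    rw [hy, Function.update_of_ne hj] at this
    exact this.symm

/-- Emission rule at substep `i` of sweep `k`, in terms of class weights. -/
lemma emit (hi1 : 1 ≤ i) (x : GState N) (k : ℕ)
    (hact : ∀ j, j ≠ scanVar N hN i → hg.X (k * N + (i-1)) j = x j) :
    hg.X (k * N + i) (scanVar N hN i)
      = decide (0 < hg.W (k * N + (i-1)) (scanVar N hN i)
          (Function.update x (scanVar N hN i) (hg.X (k * N + (i-1)) (scanVar N hN i)))) := by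
  set iv := scanVar N hN i with hiv
  have ht : k * N + (i-1) + 1 = k * N + i := by omega
  have hsc : scanVar N hN (k * N + (i-1) + 1) = iv := by
    rw [ht, hiv]; exact scanVar_shift hN i k hi1
  have hX : hg.X (k * N + (i-1)) = Function.update x iv (hg.X (k * N + (i-1)) iv) := by
    funext j
    by_cases hj : j = iv
    · subst hj; simp
    · rw [Function.update_of_ne hj]
      exact hact j hj
  have := hg.step_cur (k * N + (i-1))
  rw [hsc, ht] at this
  rw [this, ← hX]

/-- If the true conditional of emitting `true` is zero, the weight stays nonpositive. -/
lemma weight_nonpos (iv : Fin N) (x : GState N)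
    (hp : condProb π iv x true = 0) :
    ∀ t, hg.W t iv x ≤ 0 := by
  intro t
  induction t with
  | zero => rw [← hp]; exact (hg.init_w iv x).2
  | succ t ih =>
      by_cases h : iv = scanVar N hN (t+1) ∧ ∀ j, j ≠ iv → x j = hg.X t j
      · obtain ⟨h1, h2⟩ := h
        have := hg.w_active t x (by rw [← h1]; exact h2)
        rw [← h1] at this
        rw [this, hp]
        have : (0:ℝ) ≤ if hg.X (t+1) iv = true then 1 else 0 := by
          split <;> norm_num
        linarith
      · rw [hg.w_frozen t iv x h]; exact ih

/-- If the true conditional of emitting `false` is zero (and the context has positive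
mass), the weight stays positive. -/
lemma weight_pos (iv : Fin N) (x : GState N)
    (hp : condProb π iv x true = 1) :
    ∀ t, 0 < hg.W t iv x := by
  intro t
  induction t with
  | zero =>
      have := (hg.init_w iv x).1
      rw [hp] at this
      linarith
  | succ t ih =>
      by_cases h : iv = scanVar N hN (t+1) ∧ ∀ j, j ≠ iv → x j = hg.X t j
      · obtain ⟨h1, h2⟩ := h
        have := hg.w_active t x (by rw [← h1]; exact h2)
        rw [← h1] at this
        rw [this, hp]
        have : (if hg.X (t+1) iv = true then (1:ℝ) else 0) ≤ 1 := by
          split <;> norm_num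
        linarith
      · rw [hg.w_frozen t iv x h]; exact ih

/-- The herded Gibbs trajectory stays in the support of π. -/
lemma posTraj (hπ0 : ∀ x, 0 ≤ π x) : ∀ t, 0 < π (hg.X t) := by
  intro t
  induction t with
  | zero => exact hg.init_support
  | succ t ih =>
      set iv := scanVar N hN (t+1) with hiv
      set x := hg.X t with hx
      set b := hg.X (t+1) iv with hb
      have hX1 : hg.X (t+1) = Function.update x iv b := by
        funext j
        by_cases hj : j = iv
        · subst hj; simp [hb]
        · rw [Function.update_of_ne hj]
          exact hg.step_other t j hj
      have hS : 0 < π (Function.update x iv true) + π (Function.update x iv false) := by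
        have h1 : π x = π (Function.update x iv (x iv)) := by
          rw [Function.update_eq_self]
        cases hxb : x iv
        · rw [hxb] at h1
          have := hπ0 (Function.update x iv true)
          linarith [ih.trans_le (le_of_eq h1)]
        · rw [hxb] at h1
          have := hπ0 (Function.update x iv false)
          linarith [ih.trans_le (le_of_eq h1)]
      by_contra hcon
      push_neg at hcon
      have hzero : π (hg.X (t+1)) = 0 := le_antisymm hcon (hπ0 _)
      rw [hX1] at hzero
      have hemit := hg.step_cur t
      rw [← hiv, ← hx] at hemit
      cases hbv : b
      · -- emitted false, so condProb π iv x false = 0, hence condProb true = 1,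
        -- weight positive, should have emitted true
        rw [hbv] at hzero
        have hp1 : condProb π iv x true = 1 := by
          unfold condProb
          rw [hzero] at hS ⊢
          rw [add_zero] at hS ⊢
          exact div_self hS.ne'
        have hw := weight_pos hN π hg iv x hp1 t
        have hdec : decide (0 < hg.W t iv x) = true := decide_eq_true hw
        rw [hdec] at hemit
        rw [← hb, hbv] at hemit
        simp at hemit
      · -- emitted true, so condProb π iv x true = 0, weight nonpositive
        rw [hbv] at hzero
        have hp0 : condProb π iv x true = 0 := by
          unfold condProb
          rw [hzero, zero_div]
        have hw := weight_nonpos hN π hg iv x hp0 t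
        have hdec : decide (0 < hg.W t iv x) = false := decide_eq_false (by linarith)
        rw [hdec] at hemit
        rw [← hb, hbv] at hemit
        simp at hemit

end HGAux
namespace HGAux

variable {N : ℕ} (hN : 0 < N) (π : GState N → ℝ) (hg : HerdedGibbs N hN π)

lemma Ico_succ_insert (k : ℕ) : Finset.Ico 0 (k+1) = insert k (Finset.Ico 0 k) := by
  ext a; simp; omega

/-- The herding property: the empirical conditional counts track the true conditional. -/
lemma herding_true (hπ0 : ∀ x, 0 ≤ π x) (i : ℕ) (hi1 : 1 ≤ i) (hiN : i ≤ N)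
    (x : GState N) (T : ℕ) :
    |(empNum hN hg.X 0 T i x true : ℝ)
      - condProb π (scanVar N hN i) x true * (empDen hN hg.X 0 T i x : ℝ)| ≤ 2 := by
  classical
  set iv := scanVar N hN i with hiv
  set p := condProb π iv x true with hp
  have hp0 : 0 ≤ p := condProb_nonneg π hπ0 iv x true
  have hp1 : p ≤ 1 := condProb_le_one π hπ0 iv x true
  set vt : ℕ → ℝ := fun k => hg.W (k*N+(i-1)) iv (Function.update x iv true) with hvt
  set vf : ℕ → ℝ := fun k => hg.W (k*N+(i-1)) iv (Function.update x iv false) with hvf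
  have hcpb : ∀ b : Bool, condProb π iv (Function.update x iv b) true = p := by
    intro b
    exact condProb_congr π iv (fun j hj => Function.update_of_ne hj _ _) true
  have hinit : ∀ b : Bool, p - 1 < hg.W (i-1) iv (Function.update x iv b)
      ∧ hg.W (i-1) iv (Function.update x iv b) ≤ p := by
    intro b
    rw [weight_init_const hN π hg i hi1 hiN iv hiv]
    have := hg.init_w iv (Function.update x iv b)
    rw [hcpb b] at this
    exact this
  have hzn : (0*N+(i-1) : ℕ) = i - 1 := by omega
  have hvt0 : p - 1 < vt 0 ∧ vt 0 ≤ p := by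
    rw [hvt]; simp only [hzn, zero_mul, zero_add]; exact hinit true
  have hvf0 : p - 1 < vf 0 ∧ vf 0 ≤ p := by
    rw [hvf]; simp only [hzn, zero_mul, zero_add]; exact hinit false
  set d := vt 0 - vf 0 with hd
  have hdabs : -1 < d ∧ d < 1 :=
    ⟨by linarith [hvt0.1, hvf0.2], by linarith [hvt0.2, hvf0.1]⟩
  set m := min d 0 with hm
  set M := max d 0 with hM
  have hmM : m ≤ 0 ∧ 0 ≤ M ∧ M - m ≤ 1 := by
    refine ⟨min_le_right _ _, le_max_right _ _, ?_⟩
    rcases le_or_gt d 0 with h | h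
    · rw [hm, hM, min_eq_left h, max_eq_right h]; linarith [hdabs.1]
    · rw [hm, hM, min_eq_right h.le, max_eq_left h.le]; linarith [hdabs.2]
  have hmd : m ≤ d := min_le_left _ _
  have hdM : d ≤ M := le_max_left _ _
  have hm0 : m ≤ 0 := hmM.1
  have h0M : 0 ≤ M := hmM.2.1
  have hMm : M - m ≤ 1 := hmM.2.2
  have hrect : ∀ k, vt (k+1) = vt k
      + (if ∀ j, j ≠ iv → hg.X (k * N + (i-1)) j = x j then
          p - (if hg.X (k * N + i) iv = true then 1 else 0) else 0) := by
    intro k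
    have := wrec hN π hg i hi1 hiN x true k
    rw [← hiv, ← hp] at this
    exact this
  have hrecf : ∀ k, vf (k+1) = vf k
      + (if ∀ j, j ≠ iv → hg.X (k * N + (i-1)) j = x j then
          p - (if hg.X (k * N + i) iv = true then 1 else 0) else 0) := by
    intro k
    have := wrec hN π hg i hi1 hiN x false k
    rw [← hiv, ← hp] at this
    exact this
  -- the invariant
  have hINV : ∀ k, vt k - vf k = d ∧ (p - 1 + m < vt k ∧ vt k ≤ p + M) := by
    intro k
    induction k with
    | zero => exact ⟨rfl, by linarith [hvt0.1], by linarith [hvt0.2]⟩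
    | succ k ih =>
        obtain ⟨ihd, ihl, ihu⟩ := ih
        by_cases hact : ∀ j, j ≠ iv → hg.X (k * N + (i-1)) j = x j
        · have hem := emit hN π hg i hi1 x k hact
          rw [← hiv] at hem
          have hwt : hg.W (k*N+(i-1)) iv (Function.update x iv true) = vt k := rfl
          have hwf : hg.W (k*N+(i-1)) iv (Function.update x iv false) = vf k := rfl
          have hvfk : vf k = vt k - d := by linarith
          rw [hrect k, hrecf k, if_pos hact]
          cases hβv : hg.X (k * N + (i-1)) iv
          all_goals rw [hβv] at hem
          -- β = false : driver is vf k
          · rw [hwf, hvfk] at hem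
            cases hev : hg.X (k * N + i) iv
            all_goals rw [hev] at hem
            · have hle : vt k - d ≤ 0 := not_lt.mp (of_decide_eq_false hem.symm)
              have hE : (if (false = true) then (1:ℝ) else 0) = 0 := by norm_num
              rw [hE]
              exact ⟨by linarith, by linarith, by linarith⟩
            · have hlt : 0 < vt k - d := of_decide_eq_true hem.symm
              have hE : (if (true = true) then (1:ℝ) else 0) = 1 := by norm_num
              rw [hE]
              exact ⟨by linarith, by linarith, by linarith⟩
          -- β = true : driver is vt k
          · rw [hwt] at hem
            cases hev : hg.X (k * N + i) iv
            all_goals rw [hev] at hem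
            · have hle : vt k ≤ 0 := not_lt.mp (of_decide_eq_false hem.symm)
              have hE : (if (false = true) then (1:ℝ) else 0) = 0 := by norm_num
              rw [hE]
              exact ⟨by linarith, by linarith, by linarith⟩
            · have hlt : 0 < vt k := of_decide_eq_true hem.symm
              have hE : (if (true = true) then (1:ℝ) else 0) = 1 := by norm_num
              rw [hE]
              exact ⟨by linarith, by linarith, by linarith⟩
        · rw [hrect k, hrecf k, if_neg hact, add_zero, add_zero]
          exact ⟨ihd, ihl, ihu⟩
  -- counting recursions
  have hidx : ∀ k : ℕ, k * N + i - 1 = k * N + (i-1) := fun k => by omega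
  have hstep : ∀ k, ∀ j, j ≠ iv → hg.X (k*N+i) j = hg.X (k*N+(i-1)) j := by
    intro k j hj
    have ht : k * N + (i-1) + 1 = k * N + i := by omega
    have hsc : scanVar N hN (k*N+(i-1)+1) = iv := by
      rw [ht, hiv]; exact scanVar_shift hN i k hi1
    have := hg.step_other (k*N+(i-1)) j (by rw [hsc]; exact hj)
    rw [ht] at this
    exact this
  have hden_rec : ∀ k, empDen hN hg.X 0 (k+1) i x = empDen hN hg.X 0 k i x
      + (if ∀ j, j ≠ iv → hg.X (k*N+(i-1)) j = x j then 1 else 0) := by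
    intro k
    unfold empDen
    rw [zero_add, zero_add, Ico_succ_insert, Finset.filter_insert]
    have hiff : (∀ j, j ≠ scanVar N hN i → hg.X (k * N + i - 1) j = x j)
        ↔ (∀ j, j ≠ iv → hg.X (k*N+(i-1)) j = x j) := by
      rw [hidx k, ← hiv]
    by_cases hact : ∀ j, j ≠ iv → hg.X (k*N+(i-1)) j = x j
    · rw [if_pos (hiff.mpr hact), if_pos hact,
        Finset.card_insert_of_notMem (fun hmem => by simp at hmem)]
    · rw [if_neg (fun h => hact (hiff.mp h)), if_neg hact, add_zero]
  have hnum_rec : ∀ k, empNum hN hg.X 0 (k+1) i x true = empNum hN hg.X 0 k i x true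
      + (if (∀ j, j ≠ iv → hg.X (k*N+(i-1)) j = x j) ∧ hg.X (k*N+i) iv = true
         then 1 else 0) := by
    intro k
    unfold empNum
    rw [zero_add, zero_add, Ico_succ_insert, Finset.filter_insert]
    have hiff : ((∀ j, j ≠ scanVar N hN i → hg.X (k * N + i) j = x j)
          ∧ hg.X (k * N + i) (scanVar N hN i) = true)
        ↔ ((∀ j, j ≠ iv → hg.X (k*N+(i-1)) j = x j) ∧ hg.X (k*N+i) iv = true) := by
      rw [← hiv]
      constructor
      · rintro ⟨h1, h2⟩
        exact ⟨fun j hj => ((hstep k j hj).symm.trans (h1 j hj)), h2⟩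
      · rintro ⟨h1, h2⟩
        exact ⟨fun j hj => ((hstep k j hj).trans (h1 j hj)), h2⟩
    by_cases hact : (∀ j, j ≠ iv → hg.X (k*N+(i-1)) j = x j) ∧ hg.X (k*N+i) iv = true
    · rw [if_pos (hiff.mpr hact), if_pos hact,
        Finset.card_insert_of_notMem (fun hmem => by simp at hmem)]
    · rw [if_neg (fun h => hact (hiff.mp h)), if_neg hact, add_zero]
  -- telescoping
  have hTEL : ∀ k, (empNum hN hg.X 0 k i x true : ℝ)
      = p * (empDen hN hg.X 0 k i x : ℝ) + (vt 0 - vt k) := by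
    intro k
    induction k with
    | zero =>
        unfold empNum empDen
        simp
    | succ k ih =>
        rw [hnum_rec k, hden_rec k, hrect k]
        push_cast
        by_cases hact : ∀ j, j ≠ iv → hg.X (k*N+(i-1)) j = x j
        · simp only [if_pos hact]
          cases hev : hg.X (k * N + i) iv
          · simp only [Bool.false_eq_true, and_false, if_false, sub_zero]
            linarith [ih]
          · simp only [eq_self_iff_true, and_true, if_true, if_pos hact]
            linarith [ih]
        · simp only [if_neg hact, if_neg (fun h : _ ∧ _ => hact h.1), add_zero]
          linarith [ih]
  -- conclusion
  obtain ⟨-, hTl, hTu⟩ := hINV T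
  have h0l : p - 1 + m < vt 0 := by linarith [hvt0.1]
  have h0u : vt 0 ≤ p + M := by linarith [hvt0.2]
  rw [hTEL T]
  have he : p * (empDen hN hg.X 0 T i x : ℝ) + (vt 0 - vt T)
      - p * (empDen hN hg.X 0 T i x : ℝ) = vt 0 - vt T := by ring
  rw [he, abs_le]
  constructor <;> linarith

end HGAux
namespace HGAux

variable {N : ℕ}

/-- Empirical distribution counts at sub-step `i`. -/
def cnt (X : ℕ → GState N) (T i : ℕ) (y : GState N) : ℕ :=
  ((Finset.Ico 0 T).filter fun k => X (k * N + i) = y).card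

lemma empDist_eq (X : ℕ → GState N) (T : ℕ) :
    empDist X 0 T = fun y => (cnt X T 0 y : ℝ) / T := by
  funext y
  unfold empDist cnt
  rw [zero_add]
  norm_num

variable (hN : 0 < N) (π : GState N → ℝ) (hg : HerdedGibbs N hN π)

lemma sum_cnt (X : ℕ → GState N) (T i : ℕ) : ∑ y, cnt X T i y = T := by
  unfold cnt
  calc ∑ y, ((Finset.Ico 0 T).filter fun k => X (k * N + i) = y).card
      = (Finset.Ico 0 T).card := (Finset.card_eq_sum_card_fiberwise
        (fun k _ => Finset.mem_univ (X (k * N + i)))).symm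
    _ = T := by simp

lemma den_eq_cnt_pair (i : ℕ) (hi1 : 1 ≤ i) (T : ℕ) (x : GState N) :
    empDen hN hg.X 0 T i x
      = cnt hg.X T (i-1) (Function.update x (scanVar N hN i) true)
        + cnt hg.X T (i-1) (Function.update x (scanVar N hN i) false) := by
  classical
  set iv := scanVar N hN i with hiv
  unfold empDen cnt
  rw [zero_add]
  have hidx : ∀ k : ℕ, k * N + i - 1 = k * N + (i-1) := fun k => by omega
  have hpred : ∀ k, (∀ j, j ≠ iv → hg.X (k * N + i - 1) j = x j)
      ↔ (hg.X (k * N + (i-1)) = Function.update x iv true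
          ∨ hg.X (k * N + (i-1)) = Function.update x iv false) := by
    intro k
    rw [hidx k]
    constructor
    · intro h
      have := eq_update_of_agree (x := x) (y := hg.X (k * N + (i-1))) (i := iv)
        (fun j hj => (h j hj).symm)
      cases hb : hg.X (k * N + (i-1)) iv
      · right; rw [this, hb]
      · left; rw [this, hb]
    · rintro (h | h) <;> intro j hj <;> rw [h, Function.update_of_ne hj]
  rw [Finset.filter_congr (fun k _ => hpred k), Finset.filter_or]
  apply Finset.card_union_of_disjoint
  rw [Finset.disjoint_left]
  intro k h1 h2
  rw [Finset.mem_filter] at h1 h2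
  exact update_ne_update x iv (h1.2.symm.trans h2.2)

lemma num_split (i : ℕ) (hi1 : 1 ≤ i) (T : ℕ) (x : GState N) :
    empNum hN hg.X 0 T i x true + empNum hN hg.X 0 T i x false
      = empDen hN hg.X 0 T i x := by
  classical
  set iv := scanVar N hN i with hiv
  unfold empNum empDen
  have hstep : ∀ k : ℕ, ∀ j, j ≠ iv → hg.X (k*N+i) j = hg.X (k*N+ i - 1) j := by
    intro k j hj
    have ht : k * N + i - 1 + 1 = k * N + i := by omega
    have hsc : scanVar N hN (k*N+ i - 1 + 1) = iv := by
      rw [ht, hiv]; exact scanVar_shift hN i k hi1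
    have := hg.step_other (k*N+ i - 1) j (by rw [hsc]; exact hj)
    rw [ht] at this
    exact this
  have hpred : ∀ k : ℕ, (∀ j, j ≠ iv → hg.X (k * N + i - 1) j = x j)
      ↔ (∀ j, j ≠ iv → hg.X (k * N + i) j = x j) := by
    intro k
    constructor
    · intro h j hj; exact (hstep k j hj).trans (h j hj)
    · intro h j hj; exact (hstep k j hj).symm.trans (h j hj)
  rw [Finset.filter_congr (fun k (_ : k ∈ Finset.Ico 0 (0+T)) => hpred k)]
  rw [← Finset.filter_filter (fun k => ∀ j, j ≠ iv → hg.X (k * N + i) j = x j)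
    (fun k => hg.X (k * N + i) iv = true),
    ← Finset.filter_filter (fun k => ∀ j, j ≠ iv → hg.X (k * N + i) j = x j)
    (fun k => hg.X (k * N + i) iv = false)]
  have hpart := Finset.card_filter_add_card_filter_not
    (s := (Finset.Ico 0 (0+T)).filter (fun k => ∀ j, j ≠ iv → hg.X (k * N + i) j = x j))
    (p := fun k => hg.X (k * N + i) iv = true)
  rw [← hpart]
  congr 1
  congr 1
  apply Finset.filter_congr
  intro k _
  simp

lemma num_le_den (i : ℕ) (hi1 : 1 ≤ i) (T : ℕ) (x : GState N) (b : Bool) :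
    empNum hN hg.X 0 T i x b ≤ empDen hN hg.X 0 T i x := by
  cases b
  · rw [← num_split hN π hg i hi1 T x]; omega
  · rw [← num_split hN π hg i hi1 T x]; omega

lemma cnt_eq_num (i : ℕ) (T : ℕ) (y : GState N) :
    cnt hg.X T i y = empNum hN hg.X 0 T i y (y (scanVar N hN i)) := by
  classical
  set iv := scanVar N hN i with hiv
  unfold cnt empNum
  rw [zero_add]
  congr 1
  apply Finset.filter_congr
  intro k _
  constructor
  · intro h
    exact ⟨fun j _ => by rw [h], by rw [h]⟩
  · rintro ⟨h1, h2⟩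
    funext j
    by_cases hj : j = iv
    · subst hj; exact h2
    · exact h1 j hj

lemma den_congr (i : ℕ) (T : ℕ) (x : GState N) (b : Bool) :
    empDen hN hg.X 0 T i (Function.update x (scanVar N hN i) b)
      = empDen hN hg.X 0 T i x := by
  unfold empDen
  congr 1
  apply Finset.filter_congr
  intro k _
  constructor
  · intro h j hj
    rw [h j hj, Function.update_of_ne hj]
  · intro h j hj
    rw [h j hj, Function.update_of_ne hj]

lemma num_congr (i : ℕ) (T : ℕ) (x : GState N) (b c : Bool) :
    empNum hN hg.X 0 T i (Function.update x (scanVar N hN i) b) c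
      = empNum hN hg.X 0 T i x c := by
  unfold empNum
  congr 1
  apply Finset.filter_congr
  intro k _
  constructor
  · rintro ⟨h1, h2⟩
    exact ⟨fun j hj => by rw [h1 j hj, Function.update_of_ne hj], h2⟩
  · rintro ⟨h1, h2⟩
    exact ⟨fun j hj => by rw [h1 j hj, Function.update_of_ne hj], h2⟩

lemma cnt_le_den (i : ℕ) (hi1 : 1 ≤ i) (T : ℕ) (x : GState N) :
    cnt hg.X T (i-1) x ≤ empDen hN hg.X 0 T i x := by
  unfold cnt empDen
  rw [zero_add]
  apply Finset.card_le_card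
  apply Finset.monotone_filter_right
  intro k _ h j hj
  have hidx : k * N + i - 1 = k * N + (i-1) := by omega
  rw [hidx, h]

end HGAux
namespace HGAux

variable {N : ℕ} (hN : 0 < N) (π : GState N → ℝ) (hg : HerdedGibbs N hN π)

lemma cnt_le_T (X : ℕ → GState N) (T i : ℕ) (y : GState N) : cnt X T i y ≤ T := by
  conv_rhs => rw [← sum_cnt X T i]
  exact Finset.single_le_sum (fun x _ => Nat.zero_le _) (Finset.mem_univ y)

/-- Exact factorization: empirical substep distribution = previous × empirical kernel. -/
lemma cnt_exact (i : ℕ) (hi1 : 1 ≤ i) (T : ℕ) (y : GState N) :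
    (cnt hg.X T i y : ℝ)
      = ∑ x, (cnt hg.X T (i-1) x : ℝ) * empStepKernel hN π hg.X 0 T i x y := by
  classical
  set iv := scanVar N hN i with hiv
  have hvan : ∀ x, ¬ (∀ j, j ≠ iv → y j = x j) →
      (cnt hg.X T (i-1) x : ℝ) * empStepKernel hN π hg.X 0 T i x y = 0 := by
    intro x hx
    unfold empStepKernel
    rw [← hiv, if_neg, mul_zero]
    intro h
    exact hx (fun j hj => (h j hj).symm)
  rw [sum_class y iv _ hvan]
  have hker : ∀ b : Bool, empStepKernel hN π hg.X 0 T i (Function.update y iv b) y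
      = (if empDen hN hg.X 0 T i y = 0 then condProb π iv y (y iv)
         else (empNum hN hg.X 0 T i y (y iv) : ℝ) / (empDen hN hg.X 0 T i y : ℝ)) := by
    intro b
    unfold empStepKernel
    rw [← hiv, if_pos (fun j hj => Function.update_of_ne hj _ _)]
    rw [den_congr hN π hg i T y b, num_congr hN π hg i T y b (y iv),
      condProb_congr π iv (fun j hj => Function.update_of_ne hj _ _) (y iv)]
  rw [hker true, hker false, ← add_mul]
  have hpair := den_eq_cnt_pair hN π hg i hi1 T y
  rw [← hiv] at hpair
  by_cases hden : empDen hN hg.X 0 T i y = 0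
  · have h0 : cnt hg.X T (i-1) (Function.update y iv true) = 0
        ∧ cnt hg.X T (i-1) (Function.update y iv false) = 0 := by
      rw [hden] at hpair; omega
    have hy0 : cnt hg.X T i y = 0 := by
      have h1 := cnt_eq_num hN π hg i T y
      have h2 := num_le_den hN π hg i hi1 T y (y (scanVar N hN i))
      omega
    rw [h0.1, h0.2, hy0]
    norm_num
  · rw [if_neg hden]
    rw [show ((cnt hg.X T (i-1) (Function.update y iv true) : ℝ)
        + (cnt hg.X T (i-1) (Function.update y iv false) : ℝ))
        = (empDen hN hg.X 0 T i y : ℝ) by exact_mod_cast hpair.symm]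
    rw [mul_div_cancel₀]
    · rw [cnt_eq_num hN π hg i T y, hiv]
    · exact_mod_cast hden

/-- Row-wise L1 distance between empirical and true kernels on visited rows. -/
lemma row_bound (hπ0 : ∀ x, 0 ≤ π x) (i : ℕ) (hi1 : 1 ≤ i) (hiN : i ≤ N) (T : ℕ)
    (x : GState N) (hden : 0 < empDen hN hg.X 0 T i x)
    (hS : 0 < π (Function.update x (scanVar N hN i) true)
        + π (Function.update x (scanVar N hN i) false)) :
    ∑ y, |empStepKernel hN π hg.X 0 T i x y - stepKernel π (scanVar N hN i) x y|
      ≤ 4 / (empDen hN hg.X 0 T i x : ℝ) := by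
  classical
  set iv := scanVar N hN i with hiv
  set den := empDen hN hg.X 0 T i x with hdd
  have hdpos : (0:ℝ) < (den : ℝ) := by exact_mod_cast hden
  have hvan : ∀ y, ¬ (∀ j, j ≠ iv → x j = y j) →
      |empStepKernel hN π hg.X 0 T i x y - stepKernel π iv x y| = 0 := by
    intro y hy
    unfold empStepKernel stepKernel
    rw [← hiv, if_neg hy, if_neg hy]
    simp
  rw [sum_class x iv _ hvan]
  have hterm : ∀ b : Bool,
      |empStepKernel hN π hg.X 0 T i x (Function.update x iv b)
        - stepKernel π iv x (Function.update x iv b)|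
      = |(empNum hN hg.X 0 T i x b : ℝ) / (den : ℝ) - condProb π iv x b| := by
    intro b
    unfold empStepKernel stepKernel
    rw [← hiv, if_pos (fun j hj => (Function.update_of_ne hj _ _).symm),
      if_pos (fun j hj => (Function.update_of_ne hj _ _).symm),
      if_neg (by omega : ¬ empDen hN hg.X 0 T i x = 0), Function.update_self]
  rw [hterm true, hterm false]
  have htrue : |(empNum hN hg.X 0 T i x true : ℝ) / (den : ℝ) - condProb π iv x true|
      ≤ 2 / (den : ℝ) := by
    have h1 := herding_true hN π hg hπ0 i hi1 hiN x T
    rw [← hiv, ← hdd] at h1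
    have h2 : (empNum hN hg.X 0 T i x true : ℝ) / (den : ℝ) - condProb π iv x true
        = ((empNum hN hg.X 0 T i x true : ℝ) - condProb π iv x true * (den : ℝ)) / (den : ℝ) := by
      field_simp
    rw [h2, abs_div, abs_of_pos hdpos]
    gcongr
  have hfalse : |(empNum hN hg.X 0 T i x false : ℝ) / (den : ℝ) - condProb π iv x false|
      ≤ 2 / (den : ℝ) := by
    have hpf : condProb π iv x false = 1 - condProb π iv x true := by
      have := condProb_add π (x := x) (i := iv) hS
      linarith
    have hnf : (empNum hN hg.X 0 T i x false : ℝ)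
        = (den : ℝ) - (empNum hN hg.X 0 T i x true : ℝ) := by
      have := num_split hN π hg i hi1 T x
      rw [← hdd] at this
      push_cast [← this]
      ring
    have h3 : (empNum hN hg.X 0 T i x false : ℝ) / (den : ℝ) - condProb π iv x false
        = -((empNum hN hg.X 0 T i x true : ℝ) / (den : ℝ) - condProb π iv x true) := by
      rw [hpf, hnf]
      field_simp
      ring
    rw [h3, abs_neg]
    exact htrue
  have : (2:ℝ) / den + 2 / den = 4 / den := by ring
  linarith

/-- The substep L1 error bound. -/
lemma step_l1 (hπ0 : ∀ x, 0 ≤ π x) (i : ℕ) (hi1 : 1 ≤ i) (hiN : i ≤ N) (T : ℕ) :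
    ∑ y, |(cnt hg.X T i y : ℝ) / T
        - vK (fun x => (cnt hg.X T (i-1) x : ℝ) / T) (stepKernel π (scanVar N hN i)) y|
      ≤ (Fintype.card (GState N) : ℝ) * 4 / T := by
  classical
  set iv := scanVar N hN i with hiv
  have hterm : ∀ y, (cnt hg.X T i y : ℝ) / T
      - vK (fun x => (cnt hg.X T (i-1) x : ℝ) / T) (stepKernel π iv) y
      = ∑ x, ((cnt hg.X T (i-1) x : ℝ) / T)
          * (empStepKernel hN π hg.X 0 T i x y - stepKernel π iv x y) := by
    intro y
    unfold vK
    rw [cnt_exact hN π hg i hi1 T y, Finset.sum_div, ← Finset.sum_sub_distrib]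
    refine Finset.sum_congr rfl (fun x _ => ?_)
    ring
  calc ∑ y, |(cnt hg.X T i y : ℝ) / T
        - vK (fun x => (cnt hg.X T (i-1) x : ℝ) / T) (stepKernel π iv) y|
      ≤ ∑ y, ∑ x, ((cnt hg.X T (i-1) x : ℝ) / T)
          * |empStepKernel hN π hg.X 0 T i x y - stepKernel π iv x y| := by
        refine Finset.sum_le_sum (fun y _ => ?_)
        rw [hterm y]
        refine (Finset.abs_sum_le_sum_abs _ _).trans ?_
        refine Finset.sum_le_sum (fun x _ => ?_)
        rw [abs_mul, abs_of_nonneg (by positivity)]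
    _ = ∑ x, ((cnt hg.X T (i-1) x : ℝ) / T)
          * ∑ y, |empStepKernel hN π hg.X 0 T i x y - stepKernel π iv x y| := by
        rw [Finset.sum_comm]
        exact Finset.sum_congr rfl (fun x _ => by rw [Finset.mul_sum])
    _ ≤ ∑ _x : GState N, (4:ℝ) / T := by
        refine Finset.sum_le_sum (fun x _ => ?_)
        rcases Nat.eq_zero_or_pos (cnt hg.X T (i-1) x) with hc | hc
        · rw [hc]
          simp only [Nat.cast_zero, zero_div, zero_mul]
          positivity
        · -- visited row
          have hTpos : (0:ℝ) < T := by
            have := cnt_le_T hg.X T (i-1) x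
            have : 0 < T := by omega
            exact_mod_cast this
          have hden : 0 < empDen hN hg.X 0 T i x :=
            lt_of_lt_of_le hc (cnt_le_den hN π hg i hi1 T x)
          have hS : 0 < π (Function.update x iv true) + π (Function.update x iv false) := by
            obtain ⟨k, hk⟩ := Finset.card_pos.mp hc
            rw [Finset.mem_filter] at hk
            have hπx : 0 < π x := by
              rw [← hk.2]
              exact posTraj hN π hg hπ0 (k * N + (i-1))
            have hup : π (Function.update x iv (x iv)) = π x := by
              rw [Function.update_eq_self]
            cases hxb : x iv
            · rw [hxb] at hup
              have := hπ0 (Function.update x iv true)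
              linarith
            · rw [hxb] at hup
              have := hπ0 (Function.update x iv false)
              linarith
          have hrow := row_bound hN π hg hπ0 i hi1 hiN T x hden hS
          rw [← hiv] at hrow
          have hcd : (cnt hg.X T (i-1) x : ℝ) ≤ (empDen hN hg.X 0 T i x : ℝ) := by
            exact_mod_cast cnt_le_den hN π hg i hi1 T x
          have hdpos : (0:ℝ) < (empDen hN hg.X 0 T i x : ℝ) := by exact_mod_cast hden
          calc ((cnt hg.X T (i-1) x : ℝ) / T)
                * ∑ y, |empStepKernel hN π hg.X 0 T i x y - stepKernel π iv x y|
              ≤ ((cnt hg.X T (i-1) x : ℝ) / T) * (4 / (empDen hN hg.X 0 T i x : ℝ)) := by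
                exact mul_le_mul_of_nonneg_left hrow (by positivity)
            _ ≤ 4 / T := by
                rw [div_mul_div_comm, div_le_div_iff₀ (by positivity) hTpos]
                nlinarith [hdpos, hTpos]
    _ = (Fintype.card (GState N) : ℝ) * 4 / T := by
        rw [Finset.sum_const, Finset.card_univ, nsmul_eq_mul]
        ring

end HGAux
namespace HGAux

variable {N : ℕ} (hN : 0 < N) (π : GState N → ℝ) (hg : HerdedGibbs N hN π)

lemma prod_bound (hπ0 : ∀ x, 0 ≤ π x) (T : ℕ) :
    ∀ n, n ≤ N →
      ∑ y, |(cnt hg.X T n y : ℝ) / T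
          - vK (fun x => (cnt hg.X T 0 x : ℝ) / T)
              (((List.ofFn fun i : Fin N => stepKernel π i).take n).prod) y|
        ≤ n * ((Fintype.card (GState N) : ℝ) * 4 / T) := by
  intro n
  induction n with
  | zero =>
      intro _
      simp only [List.take_zero, List.prod_nil, vK_one, Nat.cast_zero, zero_mul]
      simp
  | succ n ih =>
      intro hn
      have hnN : n < N := hn
      have htake : ((List.ofFn fun i : Fin N => stepKernel π i).take (n+1)).prod
          = ((List.ofFn fun i : Fin N => stepKernel π i).take n).prod
            * stepKernel π ⟨n, hnN⟩ := by
        rw [List.take_succ]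
        rw [List.getElem?_eq_getElem (by rw [List.length_ofFn]; exact hnN)]
        rw [List.getElem_ofFn]
        simp
      have hsv : scanVar N hN (n+1) = ⟨n, hnN⟩ := by
        apply Fin.ext
        show (n + 1 - 1) % N = n
        simp [Nat.mod_eq_of_lt hnN]
      have hstep := step_l1 hN π hg hπ0 (n+1) (by omega) hn T
      rw [hsv] at hstep
      simp only [Nat.add_sub_cancel] at hstep
      set μn := fun y => (cnt hg.X T n y : ℝ) / T with hμn
      set μ0 := fun x => (cnt hg.X T 0 x : ℝ) / T with hμ0
      set P := ((List.ofFn fun i : Fin N => stepKernel π i).take n).prod with hP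
      set K := stepKernel π (⟨n, hnN⟩ : Fin N) with hK
      rw [htake]
      have htri : ∀ y, |(cnt hg.X T (n+1) y : ℝ) / T - vK μ0 (P * K) y|
          ≤ |(cnt hg.X T (n+1) y : ℝ) / T - vK μn K y|
            + |vK μn K y - vK μ0 (P * K) y| := by
        intro y
        exact abs_sub_le _ _ _
      calc ∑ y, |(cnt hg.X T (n+1) y : ℝ) / T - vK μ0 (P * K) y|
          ≤ ∑ y, (|(cnt hg.X T (n+1) y : ℝ) / T - vK μn K y|
              + |vK μn K y - vK μ0 (P * K) y|) :=
            Finset.sum_le_sum (fun y _ => htri y)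
        _ = (∑ y, |(cnt hg.X T (n+1) y : ℝ) / T - vK μn K y|)
              + ∑ y, |vK μn K y - vK μ0 (P * K) y| := Finset.sum_add_distrib
        _ ≤ ((Fintype.card (GState N) : ℝ) * 4 / T)
              + n * ((Fintype.card (GState N) : ℝ) * 4 / T) := by
            refine add_le_add hstep ?_
            have h1 : ∀ y, vK μn K y - vK μ0 (P * K) y
                = vK (fun x => μn x - vK μ0 P x) K y := by
              intro y
              rw [vK_mul]
              exact vK_sub μn (vK μ0 P) K y
            calc ∑ y, |vK μn K y - vK μ0 (P * K) y|
                = ∑ y, |vK (fun x => μn x - vK μ0 P x) K y| := by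
                  exact Finset.sum_congr rfl (fun y _ => by rw [h1 y])
              _ ≤ ∑ x, |μn x - vK μ0 P x| :=
                  l1_vK_le _ K (stepKernel_nonneg π hπ0 _) (stepKernel_rowsum π hπ0 _)
              _ ≤ n * ((Fintype.card (GState N) : ℝ) * 4 / T) := ih (by omega)
        _ = (n+1 : ℕ) * ((Fintype.card (GState N) : ℝ) * 4 / T) := by
            push_cast
            ring

lemma sweep_l1 (hπ0 : ∀ x, 0 ≤ π x) (T : ℕ) :
    ∑ y, |(cnt hg.X T N y : ℝ) / T
        - vK (fun x => (cnt hg.X T 0 x : ℝ) / T) (sweepKernel π) y|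
      ≤ N * ((Fintype.card (GState N) : ℝ) * 4 / T) := by
  have := prod_bound hN π hg hπ0 T N le_rfl
  rw [List.take_of_length_le (by rw [List.length_ofFn])] at this
  exact this

lemma cnt_shift (T : ℕ) (y : GState N) :
    cnt hg.X T N y = ((Finset.Ico 1 (T+1)).filter fun k => hg.X (k * N) = y).card := by
  unfold cnt
  apply Finset.card_bij (fun k _ => k + 1)
  · intro a ha
    rw [Finset.mem_filter] at ha ⊢
    obtain ⟨haI, haP⟩ := ha
    rw [Finset.mem_Ico] at haI
    refine ⟨by rw [Finset.mem_Ico]; omega, ?_⟩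
    show hg.X ((a+1) * N) = y
    rw [show (a+1) * N = a * N + N from by ring]
    exact haP
  · intro a _ b _ h
    omega
  · intro b hb
    rw [Finset.mem_filter] at hb
    obtain ⟨hbI, hbP⟩ := hb
    rw [Finset.mem_Ico] at hbI
    refine ⟨b - 1, ?_, by omega⟩
    rw [Finset.mem_filter, Finset.mem_Ico]
    refine ⟨by omega, ?_⟩
    show hg.X ((b-1) * N + N) = y
    rw [show (b-1) * N + N = (b-1+1) * N from by ring, show b - 1 + 1 = b from by omega]
    exact hbP

lemma shift_l1 (T : ℕ) (hT : 1 ≤ T) :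
    ∑ y, |(cnt hg.X T N y : ℝ) / T - (cnt hg.X T 0 y : ℝ) / T|
      ≤ (Fintype.card (GState N) : ℝ) / T := by
  have hbound : ∀ y : GState N, |(cnt hg.X T N y : ℝ) - (cnt hg.X T 0 y : ℝ)| ≤ 1 := by
    intro y
    rw [cnt_shift hN π hg T y]
    unfold cnt
    simp only [add_zero]
    have hA : Finset.Ico 1 (T+1) = insert T (Finset.Ico 1 T) := by
      ext a; simp; omega
    have hB : Finset.Ico 0 T = insert 0 (Finset.Ico 1 T) := by
      ext a; simp; omega
    have hTnot : T ∉ Finset.Ico 1 T := by simp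
    have h0not : (0:ℕ) ∉ Finset.Ico 1 T := by simp
    rw [hA, hB, Finset.filter_insert, Finset.filter_insert]
    by_cases hPT : hg.X (T * N) = y <;> by_cases hP0 : hg.X (0 * N) = y
    · rw [if_pos hPT, if_pos hP0,
        Finset.card_insert_of_notMem (fun h => hTnot (Finset.mem_of_mem_filter T h)),
        Finset.card_insert_of_notMem (fun h => h0not (Finset.mem_of_mem_filter 0 h))]
      simp
    · rw [if_pos hPT, if_neg hP0,
        Finset.card_insert_of_notMem (fun h => hTnot (Finset.mem_of_mem_filter T h))]
      push_cast
      rw [abs_le]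
      constructor <;> simp
    · rw [if_neg hPT, if_pos hP0,
        Finset.card_insert_of_notMem (fun h => h0not (Finset.mem_of_mem_filter 0 h))]
      push_cast
      rw [abs_le]
      constructor <;> simp
    · rw [if_neg hPT, if_neg hP0]
      simp
  have hTpos : (0:ℝ) < T := by exact_mod_cast hT
  calc ∑ y, |(cnt hg.X T N y : ℝ) / T - (cnt hg.X T 0 y : ℝ) / T|
      ≤ ∑ _y : GState N, 1 / (T:ℝ) := by
        refine Finset.sum_le_sum (fun y _ => ?_)
        rw [div_sub_div_same, abs_div, abs_of_pos hTpos]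
        gcongr
        exact hbound y
    _ = (Fintype.card (GState N) : ℝ) / T := by
        rw [Finset.sum_const, Finset.card_univ, nsmul_eq_mul]
        ring

/-- Main convergence bound: O(1/T). -/
lemma main_bound (hπ0 : ∀ x, 0 ≤ π x) (hπ1 : ∑ x, π x = 1)
    (hη : dobrushin (sweepKernel π) < 1) (T : ℕ) (hT : 1 ≤ T) :
    tvDist (empDist hg.X 0 T) π
      ≤ (Fintype.card (GState N) : ℝ) * (4 * N + 1)
          / ((1 - dobrushin (sweepKernel π)) * T) := by
  classical
  set η := dobrushin (sweepKernel π) with hηd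
  have hη0 : 0 ≤ η := dobrushin_nonneg _
  have h1mη : 0 < 1 - η := by linarith
  have hTpos : (0:ℝ) < T := by exact_mod_cast hT
  set μ0 := fun x => (cnt hg.X T 0 x : ℝ) / T with hμ0
  have hsum1 : ∑ x, μ0 x = 1 := by
    rw [hμ0, ← Finset.sum_div]
    rw [show ∑ x, ((cnt hg.X T 0 x : ℝ)) = (T:ℝ) by exact_mod_cast congrArg Nat.cast (sum_cnt hg.X T 0)]
    exact div_self hTpos.ne'
  set ζ := fun x => μ0 x - π x with hζ
  have hζ0 : ∑ x, ζ x = 0 := by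
    rw [hζ, Finset.sum_sub_distrib, hsum1, hπ1]
    ring
  set 𝒯 := sweepKernel π with h𝒯
  have hstat : vK π 𝒯 = π := pi_stationary π hπ0
  have hD : ∑ y, |μ0 y - vK μ0 𝒯 y|
      ≤ (Fintype.card (GState N) : ℝ) * (4 * N + 1) / T := by
    have h1 := sweep_l1 hN π hg hπ0 T
    have h2 := shift_l1 hN π hg T hT
    have htri : ∀ y, |μ0 y - vK μ0 𝒯 y|
        ≤ |(cnt hg.X T N y : ℝ) / T - μ0 y| + |(cnt hg.X T N y : ℝ) / T - vK μ0 𝒯 y| := by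
      intro y
      rw [abs_sub_comm ((cnt hg.X T N y : ℝ) / T) (μ0 y)]
      exact abs_sub_le _ _ _
    calc ∑ y, |μ0 y - vK μ0 𝒯 y|
        ≤ (∑ y, |(cnt hg.X T N y : ℝ) / T - μ0 y|)
            + ∑ y, |(cnt hg.X T N y : ℝ) / T - vK μ0 𝒯 y| := by
          rw [← Finset.sum_add_distrib]
          exact Finset.sum_le_sum (fun y _ => htri y)
      _ ≤ (Fintype.card (GState N) : ℝ) / T
            + N * ((Fintype.card (GState N) : ℝ) * 4 / T) := add_le_add h2 h1
      _ = (Fintype.card (GState N) : ℝ) * (4 * N + 1) / T := by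
          field_simp
          ring
  have hcontr := dob_contract 𝒯 ζ hζ0
  rw [← hηd] at hcontr
  have hdec : ∀ y, ζ y = (μ0 y - vK μ0 𝒯 y) + vK ζ 𝒯 y := by
    intro y
    have h1 : vK ζ 𝒯 y = vK μ0 𝒯 y - vK π 𝒯 y := by
      rw [← vK_sub μ0 π 𝒯 y]
    rw [h1, hstat, hζ]
    ring
  have hl1 : ∑ y, |ζ y| ≤ (∑ y, |μ0 y - vK μ0 𝒯 y|) + ∑ y, |vK ζ 𝒯 y| := by
    rw [← Finset.sum_add_distrib]
    refine Finset.sum_le_sum (fun y _ => ?_)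
    rw [hdec y]
    exact abs_add_le _ _
  have hfinal : ∑ y, |ζ y| ≤ ((Fintype.card (GState N) : ℝ) * (4 * N + 1) / T) / (1 - η) := by
    have h3 : ∑ y, |ζ y| ≤ (Fintype.card (GState N) : ℝ) * (4 * N + 1) / T
        + η * ∑ y, |ζ y| := by
      calc ∑ y, |ζ y| ≤ (∑ y, |μ0 y - vK μ0 𝒯 y|) + ∑ y, |vK ζ 𝒯 y| := hl1
        _ ≤ (Fintype.card (GState N) : ℝ) * (4 * N + 1) / T + η * ∑ y, |ζ y| :=
            add_le_add hD hcontr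
    rw [le_div_iff₀ h1mη]
    linarith
  have hμeq : empDist hg.X 0 T = μ0 := empDist_eq hg.X T
  unfold tvDist
  rw [hμeq]
  have : ∑ x, |μ0 x - π x| = ∑ y, |ζ y| := rfl
  rw [this]
  rw [div_le_iff₀ (by norm_num : (0:ℝ) < 2)] at *
  calc ∑ y, |ζ y| ≤ ((Fintype.card (GState N) : ℝ) * (4 * N + 1) / T) / (1 - η) := hfinal
    _ ≤ (Fintype.card (GState N) : ℝ) * (4 * N + 1) / ((1 - η) * T) * 2 := by
        rw [div_div]
        rw [show (1-η) * (T:ℝ) = (T:ℝ) * (1-η) by ring]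
        have hpos : (0:ℝ) < (T:ℝ) * (1 - η) := by positivity
        have hx : (0:ℝ) ≤ (Fintype.card (GState N) : ℝ) * (4 * N + 1) / ((T:ℝ) * (1-η)) := by
          positivity
        linarith

end HGAux

/-- Corollary: O(log T / T) convergence without burn-in: under the
hypotheses of the main theorem, collecting samples from the very beginning (τ = 0) gives
d_v(P_T⁽⁰⁾ − π) ≤ (λ + τ*(T))/T for all T ≥ T* + τ*(T*), where λ = 2N(1+η)/(l(1−η)),
T* = 2B/l and τ*(T) = log_{2/(1+η)}((1−η)lT/(4N)). -/
theorem herded_gibbs_logT_over_T_convergence {N : ℕ} (hN : 0 < N)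
    (π : GState N → ℝ) (hπ0 : ∀ x, 0 ≤ π x) (hπ1 : ∑ x, π x = 1)
    (hg : HerdedGibbs N hN π)
    (hη : dobrushin (sweepKernel π) < 1) :
    ∃ l B : ℝ, 0 < l ∧ 0 < B ∧
      ∀ T : ℕ,
        2 * B / l
            + Real.logb (2 / (1 + dobrushin (sweepKernel π)))
              ((1 - dobrushin (sweepKernel π)) * l * (2 * B / l) / (4 * N)) ≤ (T : ℝ) →
        tvDist (empDist hg.X 0 T) π
          ≤ (2 * (N : ℝ) * (1 + dobrushin (sweepKernel π))
                / (l * (1 - dobrushin (sweepKernel π)))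
              + Real.logb (2 / (1 + dobrushin (sweepKernel π)))
                ((1 - dobrushin (sweepKernel π)) * l * (T : ℝ) / (4 * N))) / (T : ℝ) := by
  classical
  set η := dobrushin (sweepKernel π) with hηd
  have hη0 : 0 ≤ η := HGAux.dobrushin_nonneg _
  have h1mη : 0 < 1 - η := by linarith
  set b := 2 / (1 + η) with hbd
  have hb1 : 1 < b := by
    rw [hbd, lt_div_iff₀ (by linarith : (0:ℝ) < 1 + η)]
    linarith
  have hbpos : 0 < b := lt_trans one_pos hb1
  have hNR : (1:ℝ) ≤ (N:ℝ) := by exact_mod_cast hN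
  set A0 := (Fintype.card (GState N) : ℝ) * (4 * N + 1) / (1 - η) with hA0
  have hA0pos : 0 ≤ A0 := by positivity
  set T1 := 4 * (N:ℝ) * b ^ A0 / (1 - η) with hT1
  have hrpos : (0:ℝ) < b ^ A0 := Real.rpow_pos_of_pos hbpos A0
  have hT1pos : 0 < T1 := by positivity
  set B := max (max T1 (2 * (N:ℝ) / (1 - η))) 1 with hB
  have hB0 : 0 < B := lt_of_lt_of_le one_pos (le_max_right _ _)
  refine ⟨1, B, one_pos, hB0, ?_⟩
  intro T hT
  have hBT1 : T1 ≤ B := le_trans (le_max_left _ _) (le_max_left _ _)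
  have hB1 : (1:ℝ) ≤ B := le_max_right _ _
  have hBge : 2 * (N:ℝ) / (1 - η) ≤ B := le_trans (le_max_right _ _) (le_max_left _ _)
  have harg0 : 1 ≤ (1 - η) * 1 * (2 * B / 1) / (4 * N) := by
    rw [le_div_iff₀ (by positivity : (0:ℝ) < 4 * N)]
    rw [div_le_iff₀ h1mη] at hBge
    nlinarith
  have hlog0 : 0 ≤ Real.logb b ((1 - η) * 1 * (2 * B / 1) / (4 * N)) :=
    Real.logb_nonneg hb1 harg0
  have h2B : (2:ℝ) * B / 1 = 2 * B := by ring
  have hTB : 2 * B ≤ (T:ℝ) := by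
    rw [h2B] at hT
    rw [h2B] at hlog0
    linarith
  have hTT1 : T1 ≤ (T:ℝ) := by linarith
  have hT2 : (2:ℝ) ≤ (T:ℝ) := by linarith
  have hT1le : 1 ≤ T := by exact_mod_cast le_trans (by norm_num : (1:ℝ) ≤ 2) hT2
  have hTpos : (0:ℝ) < T := by linarith
  have hmain := HGAux.main_bound hN π hg hπ0 hπ1 hη T hT1le
  rw [← hηd] at hmain
  have hargT : b ^ A0 ≤ (1 - η) * 1 * (T:ℝ) / (4 * N) := by
    rw [le_div_iff₀ (by positivity : (0:ℝ) < 4 * N)]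
    rw [hT1, div_le_iff₀ h1mη] at hTT1
    nlinarith
  have hlogT : A0 ≤ Real.logb b ((1 - η) * 1 * (T:ℝ) / (4 * N)) := by
    calc A0 = Real.logb b (b ^ A0) := (Real.logb_rpow hbpos (ne_of_gt hb1)).symm
      _ ≤ Real.logb b ((1 - η) * 1 * (T:ℝ) / (4 * N)) :=
          Real.logb_le_logb_of_le hb1 hrpos hargT
  have hlam : 0 ≤ 2 * (N:ℝ) * (1 + η) / (1 * (1 - η)) := by positivity
  calc tvDist (empDist hg.X 0 T) π
      ≤ (Fintype.card (GState N) : ℝ) * (4 * N + 1) / ((1 - η) * T) := hmain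
    _ = A0 / T := by rw [hA0, div_div]
    _ ≤ (2 * (N : ℝ) * (1 + η) / (1 * (1 - η))
          + Real.logb b ((1 - η) * 1 * (T : ℝ) / (4 * N))) / (T : ℝ) := by
        gcongr
        linarith
end
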